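/- arXiv:1009.0085 — 2 statements merged into one kernel-verified Lean document; each statement's English description precedes it below -/
import Mathlib

section
/- Let m ≠ 0 and d = p − 1/2 for some p ∈ ℤ≥0, and let I^d ⊆ V^d be the submodule generated by the singular vector v_s^p = (G² − 2mK)^p (G − 2χS) v₀. Then the factor module V^d / I^d is irreducible. -/
/-- The `N = 1` super Schrödinger algebra 𝔰(1/1) represented on a complex vector space
`V`, together with the lowest weight (Verma) structure of conformal weight `d` and mass
`m`.  The even generators are `H, P, G, D, K, M` (satisfying the sch(1) relations, `M`
central), the odd generators are `Q, S, X`, and `Chi` is the action of the odd scalar χ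
(`χ² = m/2`, `X v₀ = χ v₀`).  Relations between generators not listed below vanish.
The Verma module `V^d` has (super) basis `{G^k K^ℓ v₀, G^k K^ℓ S v₀}` over the
coefficient superalgebra `ℂ[χ]`, i.e. the ℂ-basis `{G^k K^ℓ S^a χ^c v₀}`. -/
structure SSch1Verma (d m : ℂ) (V : Type*) [AddCommGroup V] [Module ℂ V] where
  H : Module.End ℂ V
  P : Module.End ℂ V
  G : Module.End ℂ V
  D : Module.End ℂ V
  K : Module.End ℂ V
  M : Module.End ℂ V
  Q : Module.End ℂ V
  S : Module.End ℂ V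
  X : Module.End ℂ V
  Chi : Module.End ℂ V
  -- nonvanishing even-even commutators
  rel_HD : H * D - D * H = (2 : ℂ) • H
  rel_HK : H * K - K * H = D
  rel_DK : D * K - K * D = (2 : ℂ) • K
  rel_PG : P * G - G * P = M
  rel_HG : H * G - G * H = P
  rel_DG : D * G - G * D = G
  rel_PD : P * D - D * P = P
  rel_PK : P * K - K * P = G
  -- vanishing even-even commutators
  rel_HP : H * P = P * H
  rel_HM : H * M = M * H
  rel_PM : P * M = M * P
  rel_GK : G * K = K * G
  rel_GM : G * M = M * G
  rel_DM : D * M = M * D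
  rel_KM : K * M = M * K
  -- nonvanishing even-odd commutators
  rel_QD : Q * D - D * Q = Q
  rel_QK : Q * K - K * Q = S
  rel_DS : D * S - S * D = S
  rel_HS : H * S - S * H = Q
  rel_QG : Q * G - G * Q = X
  rel_PS : P * S - S * P = X
  -- vanishing even-odd commutators
  rel_QH : Q * H = H * Q
  rel_QP : Q * P = P * Q
  rel_QM : Q * M = M * Q
  rel_SG : S * G = G * S
  rel_SK : S * K = K * S
  rel_SM : S * M = M * S
  rel_XH : X * H = H * X
  rel_XP : X * P = P * X
  rel_XG : X * G = G * X
  rel_XD : X * D = D * X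
  rel_XK : X * K = K * X
  rel_XM : X * M = M * X
  -- odd-odd anticommutators
  rel_QQ : Q * Q + Q * Q = -((2 : ℂ) • H)
  rel_SS : S * S + S * S = -((2 : ℂ) • K)
  rel_XX : X * X + X * X = -M
  rel_QX : Q * X + X * Q = -P
  rel_SX : S * X + X * S = -G
  rel_QS : Q * S + S * Q = -D
  -- χ is an odd scalar: it commutes with the even generators, anticommutes with the
  -- odd generators and satisfies χ² = m/2
  chi_H : Chi * H = H * Chi
  chi_P : Chi * P = P * Chi
  chi_G : Chi * G = G * Chi
  chi_D : Chi * D = D * Chi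
  chi_K : Chi * K = K * Chi
  chi_M : Chi * M = M * Chi
  chi_Q : Chi * Q = -(Q * Chi)
  chi_S : Chi * S = -(S * Chi)
  chi_X : Chi * X = -(X * Chi)
  chi_sq : Chi * Chi = (m / 2) • (1 : Module.End ℂ V)
  -- the lowest weight vector
  v0 : V
  lw_Q : Q v0 = 0
  lw_P : P v0 = 0
  lw_D : D v0 = (-d) • v0
  lw_M : M v0 = m • v0
  lw_X : X v0 = Chi v0
  -- PBW basis of the Verma module
  pbw_indep : LinearIndependent ℂ (fun i : ℕ × ℕ × Bool × Bool =>
    (G ^ i.1 * K ^ i.2.1 * (if i.2.2.1 then S else 1) * (if i.2.2.2 then Chi else 1)) v0)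
  pbw_span : Submodule.span ℂ (Set.range (fun i : ℕ × ℕ × Bool × Bool =>
    (G ^ i.1 * K ^ i.2.1 * (if i.2.2.1 then S else 1) * (if i.2.2.2 then Chi else 1)) v0)) = ⊤

namespace SSch1Verma

variable {d m : ℂ} {V : Type*} [AddCommGroup V] [Module ℂ V]

/-- A singular vector of the Verma module: homogeneous with respect to the `D`-grading
(i.e. a `D`-eigenvector), not a scalar multiple of the lowest weight vector `v₀`
(scalars being the coefficient superalgebra `ℂ[χ]`), and annihilated by `Q` and `P`. -/
def IsSingular (ρ : SSch1Verma d m V) (v : V) : Prop :=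
  (∃ n : ℂ, ρ.D v = n • v) ∧
  (∀ a b : ℂ, v ≠ a • ρ.v0 + b • ρ.Chi ρ.v0) ∧
  ρ.Q v = 0 ∧ ρ.P v = 0

/-- A subspace invariant under the action of 𝔰(1/1) (and under the odd scalar χ). -/
def Invariant (ρ : SSch1Verma d m V) (W : Submodule ℂ V) : Prop :=
  ∀ w ∈ W, ρ.H w ∈ W ∧ ρ.P w ∈ W ∧ ρ.G w ∈ W ∧ ρ.D w ∈ W ∧ ρ.K w ∈ W ∧
    ρ.M w ∈ W ∧ ρ.Q w ∈ W ∧ ρ.S w ∈ W ∧ ρ.X w ∈ W ∧ ρ.Chi w ∈ W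

/-- The submodule generated by a set of vectors: the smallest invariant subspace
containing it. -/
def gen (ρ : SSch1Verma d m V) (s : Set V) : Submodule ℂ V :=
  sInf {W | ρ.Invariant W ∧ s ⊆ W}

/-- A singular vector of the factor module `V/J`, expressed in terms of representatives:
homogeneous with respect to the induced `D`-grading, not a scalar multiple of the image
of the lowest weight vector, and annihilated by the induced actions of `Q` and `P`. -/
def IsSingularMod (ρ : SSch1Verma d m V) (J : Submodule ℂ V) (v : V) : Prop :=
  (∃ n : ℂ, ρ.D v - n • v ∈ J) ∧
  (∀ a b : ℂ, v - (a • ρ.v0 + b • ρ.Chi ρ.v0) ∉ J) ∧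
  ρ.Q v ∈ J ∧ ρ.P v ∈ J

end SSch1Verma

namespace S7

variable {d m : ℂ} {V : Type*} [AddCommGroup V] [Module ℂ V]

abbrev ι : Type := ℕ × ℕ × Bool × Bool

noncomputable def AA (ρ : SSch1Verma d m V) : Module.End ℂ V := ρ.G * ρ.G - (2 * m) • ρ.K

noncomputable def Sp (ρ : SSch1Verma d m V) : Module.End ℂ V := ρ.S - (1/m) • (ρ.G * ρ.X)

noncomputable def Ff (ρ : SSch1Verma d m V) (i : ι) : V :=
  (ρ.G ^ i.1) ((AA ρ ^ i.2.1)
    ((if i.2.2.1 then Sp ρ else 1) ((if i.2.2.2 then ρ.Chi else 1) ρ.v0)))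

lemma M_apply (ρ : SSch1Verma d m V) (v : V) : ρ.M v = m • v := by
  have key : (⊤ : Submodule ℂ V) ≤ LinearMap.ker (ρ.M - m • (1 : Module.End ℂ V)) := by
    rw [← ρ.pbw_span, Submodule.span_le]
    rintro x ⟨i, rfl⟩
    simp only [SetLike.mem_coe, LinearMap.mem_ker, LinearMap.sub_apply, LinearMap.smul_apply,
      Module.End.one_apply, sub_eq_zero]
    have hG : Commute ρ.M ρ.G := ρ.rel_GM.symm
    have hK : Commute ρ.M ρ.K := ρ.rel_KM.symm
    have hS : Commute ρ.M (if i.2.2.1 then ρ.S else 1) := by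
      cases h : i.2.2.1 <;> simp [Commute, SemiconjBy, ρ.rel_SM]
    have hC : Commute ρ.M (if i.2.2.2 then ρ.Chi else 1) := by
      cases h : i.2.2.2 <;> simp [Commute, SemiconjBy, ρ.chi_M]
    have hall : Commute ρ.M (ρ.G ^ i.1 * ρ.K ^ i.2.1 * (if i.2.2.1 then ρ.S else 1) *
        (if i.2.2.2 then ρ.Chi else 1)) :=
      (((hG.pow_right i.1).mul_right (hK.pow_right i.2.1)).mul_right hS).mul_right hC
    have h2 := congrArg (fun (T : Module.End ℂ V) => T ρ.v0) hall.eq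
    simp only [Module.End.mul_apply] at h2
    simp only [Module.End.mul_apply]
    rw [h2, ρ.lw_M]
    simp [map_smul]
  have := key (Submodule.mem_top (x := v))
  simpa [LinearMap.mem_ker, sub_eq_zero] using this

end S7

namespace S7
variable {d m : ℂ} {V : Type*} [AddCommGroup V] [Module ℂ V]

lemma M_one (ρ : SSch1Verma d m V) : ρ.M = m • (1 : Module.End ℂ V) := by
  apply LinearMap.ext; intro v; simpa using M_apply ρ v

lemma two_smul_cancel {x y : Module.End ℂ V} (h : (2:ℂ) • x = (2:ℂ) • y) : x = y := by
  have := congrArg (fun z => ((2:ℂ)⁻¹) • z) h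
  simpa [smul_smul] using this

lemma oQQ (ρ : SSch1Verma d m V) : ρ.Q * ρ.Q = -ρ.H := by
  apply two_smul_cancel
  have h := ρ.rel_QQ
  rw [← two_smul ℂ (ρ.Q * ρ.Q)] at h
  rw [h]; module

lemma oSS (ρ : SSch1Verma d m V) : ρ.S * ρ.S = -ρ.K := by
  apply two_smul_cancel
  have h := ρ.rel_SS
  rw [← two_smul ℂ (ρ.S * ρ.S)] at h
  rw [h]; module

lemma oXX (ρ : SSch1Verma d m V) : ρ.X * ρ.X = (-(m/2)) • (1 : Module.End ℂ V) := by
  apply two_smul_cancel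
  have h := ρ.rel_XX
  rw [← two_smul ℂ (ρ.X * ρ.X)] at h
  rw [h, M_one]
  rw [smul_smul]; ring_nf; module

lemma oPG (ρ : SSch1Verma d m V) : ρ.P * ρ.G = ρ.G * ρ.P + m • 1 := by
  have h := ρ.rel_PG; rw [M_one] at h
  rw [sub_eq_iff_eq_add] at h; rw [h]; abel

lemma oQG (ρ : SSch1Verma d m V) : ρ.Q * ρ.G = ρ.G * ρ.Q + ρ.X := by
  have h := ρ.rel_QG; rw [sub_eq_iff_eq_add] at h; rw [h]; abel

lemma oQK (ρ : SSch1Verma d m V) : ρ.Q * ρ.K = ρ.K * ρ.Q + ρ.S := by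
  have h := ρ.rel_QK; rw [sub_eq_iff_eq_add] at h; rw [h]; abel

lemma oPK (ρ : SSch1Verma d m V) : ρ.P * ρ.K = ρ.K * ρ.P + ρ.G := by
  have h := ρ.rel_PK; rw [sub_eq_iff_eq_add] at h; rw [h]; abel

lemma cGA (ρ : SSch1Verma d m V) : Commute ρ.G (AA ρ) := by
  unfold AA
  exact ((Commute.refl ρ.G).mul_right (Commute.refl ρ.G)).sub_right
    ((show Commute ρ.G ρ.K from ρ.rel_GK).smul_right _)

lemma cXA (ρ : SSch1Verma d m V) : Commute ρ.X (AA ρ) := by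
  unfold AA
  exact (((show Commute ρ.X ρ.G from ρ.rel_XG).mul_right
    (show Commute ρ.X ρ.G from ρ.rel_XG))).sub_right
    ((show Commute ρ.X ρ.K from ρ.rel_XK).smul_right _)

lemma cChiA (ρ : SSch1Verma d m V) : Commute ρ.Chi (AA ρ) := by
  unfold AA
  exact (((show Commute ρ.Chi ρ.G from ρ.chi_G).mul_right
    (show Commute ρ.Chi ρ.G from ρ.chi_G))).sub_right
    ((show Commute ρ.Chi ρ.K from ρ.chi_K).smul_right _)

lemma cSA (ρ : SSch1Verma d m V) : Commute ρ.S (AA ρ) := by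
  unfold AA
  exact (((show Commute ρ.S ρ.G from ρ.rel_SG).mul_right
    (show Commute ρ.S ρ.G from ρ.rel_SG))).sub_right
    ((show Commute ρ.S ρ.K from ρ.rel_SK).smul_right _)

lemma cSpA (ρ : SSch1Verma d m V) : Commute (Sp ρ) (AA ρ) := by
  unfold Sp
  exact (cSA ρ).sub_left (((cGA ρ).mul_left (cXA ρ)).smul_left _)

lemma cPA (ρ : SSch1Verma d m V) : Commute ρ.P (AA ρ) := by
  unfold AA
  have h1 : ρ.P * (ρ.G * ρ.G) = ρ.G * ρ.G * ρ.P + (2*m) • ρ.G := by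
    rw [← mul_assoc, oPG, add_mul, mul_assoc, oPG]
    rw [mul_add]
    simp only [mul_smul_comm, smul_mul_assoc, mul_one, one_mul]
    rw [← mul_assoc]
    module
  have h2 : ρ.P * ((2*m) • ρ.K) = (2*m) • ρ.K * ρ.P + (2*m) • ρ.G := by
    rw [mul_smul_comm, oPK]; simp only [smul_mul_assoc]; module
  show ρ.P * _ = _ * ρ.P
  rw [mul_sub, sub_mul, h1, h2]; module

lemma cPSp (ρ : SSch1Verma d m V) (hm : m ≠ 0) : Commute ρ.P (Sp ρ) := by
  unfold Sp
  have h1 : ρ.P * ρ.S = ρ.S * ρ.P + ρ.X := by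
    have h := ρ.rel_PS; rw [sub_eq_iff_eq_add] at h; rw [h]; abel
  have h2 : ρ.P * ((1/m) • (ρ.G * ρ.X)) = (1/m) • (ρ.G * ρ.X) * ρ.P + ρ.X := by
    rw [mul_smul_comm, ← mul_assoc, oPG, add_mul, mul_assoc]
    rw [show ρ.P * ρ.X = ρ.X * ρ.P from ρ.rel_XP.symm, ← mul_assoc]
    rw [smul_add]
    have : (1/m) • (m • (1:Module.End ℂ V) * ρ.X) = ρ.X := by
      rw [smul_mul_assoc, one_mul, smul_smul]
      field_simp; simp
    rw [this]; try simp only [smul_mul_assoc]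
    try module
  show ρ.P * _ = _ * ρ.P
  rw [mul_sub, sub_mul, h1, h2]; module

end S7

namespace S7
variable {d m : ℂ} {V : Type*} [AddCommGroup V] [Module ℂ V]

lemma oPGpow (ρ : SSch1Verma d m V) : ∀ k : ℕ,
    ρ.P * ρ.G^(k+1) = ρ.G^(k+1) * ρ.P + (((k:ℂ)+1)*m) • ρ.G^k := by
  intro k; induction k with
  | zero => simpa using oPG ρ
  | succ k ih =>
    rw [pow_succ (a := ρ.G) (n := k+1), ← mul_assoc, ih, add_mul, smul_mul_assoc,
      mul_assoc, oPG, mul_add, ← mul_assoc, ← pow_succ, ← pow_succ]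
    simp only [mul_smul_comm, mul_one]
    push_cast
    module

lemma oQGpow (ρ : SSch1Verma d m V) : ∀ k : ℕ,
    ρ.Q * ρ.G^(k+1) = ρ.G^(k+1) * ρ.Q + ((k:ℂ)+1) • (ρ.G^k * ρ.X) := by
  intro k; induction k with
  | zero => simpa using oQG ρ
  | succ k ih =>
    rw [pow_succ (a := ρ.G) (n := k+1), ← mul_assoc, ih, add_mul, smul_mul_assoc,
      mul_assoc, oQG, mul_add, ← mul_assoc, ← pow_succ]
    rw [mul_assoc (ρ.G^k), ρ.rel_XG, ← mul_assoc (ρ.G^k), ← pow_succ]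
    push_cast
    module

lemma oQA (ρ : SSch1Verma d m V) (hm : m ≠ 0) :
    ρ.Q * AA ρ = AA ρ * ρ.Q - (2*m) • Sp ρ := by
  have h1 : ρ.Q * (ρ.G * ρ.G) = ρ.G * ρ.G * ρ.Q + (2:ℂ) • (ρ.G * ρ.X) := by
    rw [← mul_assoc, oQG, add_mul, mul_assoc, oQG, mul_add, ← mul_assoc, ρ.rel_XG, two_smul]
    abel
  have h2 : ρ.Q * ((2*m) • ρ.K) = (2*m) • (ρ.K * ρ.Q) + (2*m) • ρ.S := by
    rw [mul_smul_comm, oQK]; module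
  show ρ.Q * (ρ.G * ρ.G - (2*m) • ρ.K) = (ρ.G * ρ.G - (2*m) • ρ.K) * ρ.Q - (2*m) • Sp ρ
  rw [mul_sub, sub_mul, h1, h2]
  unfold Sp
  simp only [smul_sub, smul_smul, smul_mul_assoc]
  match_scalars <;> field_simp

lemma oQApow (ρ : SSch1Verma d m V) (hm : m ≠ 0) : ∀ r : ℕ,
    ρ.Q * (AA ρ)^(r+1) = (AA ρ)^(r+1) * ρ.Q - (((r:ℂ)+1)*(2*m)) • ((AA ρ)^r * Sp ρ) := by
  intro r; induction r with
  | zero => simpa using oQA ρ hm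
  | succ r ih =>
    rw [pow_succ (a := AA ρ) (n := r+1), ← mul_assoc, ih, sub_mul, smul_mul_assoc,
      mul_assoc, oQA ρ hm, mul_sub, ← mul_assoc, ← pow_succ]
    rw [mul_assoc ((AA ρ)^r), (cSpA ρ).eq, ← mul_assoc ((AA ρ)^r), ← pow_succ]
    simp only [mul_smul_comm]
    push_cast
    module

lemma oQChi (ρ : SSch1Verma d m V) : ρ.Q * ρ.Chi = -(ρ.Chi * ρ.Q) := by
  rw [ρ.chi_Q, neg_neg]

lemma oXChi (ρ : SSch1Verma d m V) : ρ.X * ρ.Chi = -(ρ.Chi * ρ.X) := by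
  rw [ρ.chi_X, neg_neg]

lemma oSChi (ρ : SSch1Verma d m V) : ρ.S * ρ.Chi = -(ρ.Chi * ρ.S) := by
  rw [ρ.chi_S, neg_neg]

lemma oXSp (ρ : SSch1Verma d m V) (hm : m ≠ 0) : ρ.X * Sp ρ = -(Sp ρ * ρ.X) := by
  have h1 : ρ.X * (ρ.G * ρ.X) = (-(m/2)) • ρ.G := by
    rw [← mul_assoc, ρ.rel_XG, mul_assoc, oXX, mul_smul_comm, mul_one]
  have h2 : (ρ.G * ρ.X) * ρ.X = (-(m/2)) • ρ.G := by
    rw [mul_assoc, oXX, mul_smul_comm, mul_one]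
  have hs : ρ.X * ρ.S = -ρ.G - ρ.S * ρ.X := by
    have h := ρ.rel_SX; rw [← h]; abel
  show ρ.X * (ρ.S - (1/m) • (ρ.G * ρ.X)) = -((ρ.S - (1/m) • (ρ.G * ρ.X)) * ρ.X)
  rw [mul_sub, sub_mul, hs, mul_smul_comm, smul_mul_assoc, h1, h2]
  match_scalars <;> (try field_simp) <;> ring

lemma oChiSp (ρ : SSch1Verma d m V) : ρ.Chi * Sp ρ = -(Sp ρ * ρ.Chi) := by
  have h1 : ρ.Chi * (ρ.G * ρ.X) = -((ρ.G * ρ.X) * ρ.Chi) := by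
    rw [← mul_assoc, ρ.chi_G, mul_assoc, ρ.chi_X, mul_neg, ← mul_assoc]
  show ρ.Chi * (ρ.S - (1/m) • (ρ.G * ρ.X)) = -((ρ.S - (1/m) • (ρ.G * ρ.X)) * ρ.Chi)
  rw [mul_sub, sub_mul, ρ.chi_S, mul_smul_comm, smul_mul_assoc, h1]
  module

lemma oSpSp (ρ : SSch1Verma d m V) (hm : m ≠ 0) :
    Sp ρ * Sp ρ = (1/(2*m)) • AA ρ := by
  have hGX2 : (ρ.G * ρ.X) * (ρ.G * ρ.X) = (-(m/2)) • (ρ.G * ρ.G) := by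
    rw [mul_assoc, ← mul_assoc ρ.X, ρ.rel_XG, mul_assoc, oXX, ← mul_assoc]
    simp only [mul_smul_comm, mul_one]
  have hanti : ρ.S * (ρ.G * ρ.X) + (ρ.G * ρ.X) * ρ.S = -(ρ.G * ρ.G) := by
    rw [← mul_assoc, ρ.rel_SG, mul_assoc, mul_assoc, ← mul_add,
      show ρ.S * ρ.X + ρ.X * ρ.S = -ρ.G from ρ.rel_SX, mul_neg]
  have hTS : (ρ.G * ρ.X) * ρ.S = -(ρ.G * ρ.G) - ρ.S * (ρ.G * ρ.X) := by
    rw [← hanti]; abel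
  show (ρ.S - (1/m) • (ρ.G * ρ.X)) * (ρ.S - (1/m) • (ρ.G * ρ.X)) = (1/(2*m)) • AA ρ
  simp only [mul_sub, sub_mul, mul_smul_comm, smul_mul_assoc, smul_smul, oSS]
  rw [hGX2, hTS]
  unfold AA
  simp only [smul_sub, smul_neg, smul_smul]
  match_scalars <;> (try field_simp) <;> try ring

lemma oQSp (ρ : SSch1Verma d m V) (hm : m ≠ 0) :
    ρ.Q * Sp ρ + Sp ρ * ρ.Q = -ρ.D + (1/m) • (ρ.G * ρ.P) + ((1:ℂ)/2) • 1 := by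
  have h1 : ρ.Q * (ρ.G * ρ.X) + (ρ.G * ρ.X) * ρ.Q
      = -(ρ.G * ρ.P) + (-(m/2)) • (1 : Module.End ℂ V) := by
    have e1 : ρ.Q * (ρ.G * ρ.X) = ρ.G * (ρ.Q * ρ.X) + ρ.X * ρ.X := by
      rw [← mul_assoc, oQG, add_mul, mul_assoc]
    have e2 : (ρ.G * ρ.X) * ρ.Q = ρ.G * (ρ.X * ρ.Q) := mul_assoc _ _ _
    have e3 : ρ.G * (ρ.Q * ρ.X) + ρ.G * (ρ.X * ρ.Q) = -(ρ.G * ρ.P) := by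
      rw [← mul_add, show ρ.Q * ρ.X + ρ.X * ρ.Q = -ρ.P from ρ.rel_QX, mul_neg]
    calc ρ.Q * (ρ.G * ρ.X) + (ρ.G * ρ.X) * ρ.Q
        = (ρ.G * (ρ.Q * ρ.X) + ρ.G * (ρ.X * ρ.Q)) + ρ.X * ρ.X := by rw [e1, e2]; abel
      _ = -(ρ.G * ρ.P) + (-(m/2)) • 1 := by rw [e3, oXX]
  show ρ.Q * (ρ.S - (1/m) • (ρ.G * ρ.X)) + (ρ.S - (1/m) • (ρ.G * ρ.X)) * ρ.Q = _
  rw [mul_sub, sub_mul, mul_smul_comm, smul_mul_assoc]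
  rw [show ρ.Q * ρ.S - (1/m) • (ρ.Q * (ρ.G * ρ.X)) + (ρ.S * ρ.Q - (1/m) • ((ρ.G * ρ.X) * ρ.Q))
      = (ρ.Q * ρ.S + ρ.S * ρ.Q) - (1/m) • (ρ.Q * (ρ.G * ρ.X) + (ρ.G * ρ.X) * ρ.Q) from by
    rw [smul_add]; abel]
  rw [ρ.rel_QS, h1]
  simp only [smul_add, smul_neg, smul_smul]
  match_scalars <;> (try field_simp) <;> try ring

end S7

namespace S7
variable {d m : ℂ} {V : Type*} [AddCommGroup V] [Module ℂ V]

lemma comm_apply {a b : Module.End ℂ V} (h : a * b = b * a) (y : V) :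
    a (b y) = b (a y) := by
  have := congrArg (fun T : Module.End ℂ V => T y) h
  simpa [Module.End.mul_apply] using this

lemma acomm_apply {a b : Module.End ℂ V} (h : a * b = -(b * a)) (y : V) :
    a (b y) = -(b (a y)) := by
  have := congrArg (fun T : Module.End ℂ V => T y) h
  simpa [Module.End.mul_apply] using this

lemma app_pow_succ (a : Module.End ℂ V) (n : ℕ) (y : V) :
    (a^(n+1)) y = a ((a^n) y) := by
  rw [pow_succ']; rfl

lemma app_pow_succ' (a : Module.End ℂ V) (n : ℕ) (y : V) :
    (a^(n+1)) y = (a^n) (a y) := by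
  rw [pow_succ]; rfl

-- basic vector facts
lemma vChi2 (ρ : SSch1Verma d m V) (v : V) : ρ.Chi (ρ.Chi v) = (m/2) • v := by
  have := congrArg (fun T : Module.End ℂ V => T v) ρ.chi_sq
  simpa [Module.End.mul_apply] using this

lemma vX1 (ρ : SSch1Verma d m V) : ρ.X (ρ.Chi ρ.v0) = (-(m/2)) • ρ.v0 := by
  rw [acomm_apply (oXChi ρ), ρ.lw_X, vChi2]
  module

lemma vQ1 (ρ : SSch1Verma d m V) : ρ.Q (ρ.Chi ρ.v0) = 0 := by
  rw [acomm_apply (oQChi ρ), ρ.lw_Q, map_zero, neg_zero]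

lemma vP1 (ρ : SSch1Verma d m V) : ρ.P (ρ.Chi ρ.v0) = 0 := by
  rw [comm_apply ρ.chi_P.symm, ρ.lw_P, map_zero]

lemma vD1 (ρ : SSch1Verma d m V) : ρ.D (ρ.Chi ρ.v0) = (-d) • (ρ.Chi ρ.v0) := by
  rw [comm_apply ρ.chi_D.symm, ρ.lw_D, map_smul]

-- applied commutation with powers of G and A
lemma Xk (ρ : SSch1Verma d m V) (k : ℕ) (y : V) :
    ρ.X ((ρ.G^k) y) = (ρ.G^k) (ρ.X y) :=
  comm_apply ((show Commute ρ.X ρ.G from ρ.rel_XG).pow_right k).eq y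

lemma Xr (ρ : SSch1Verma d m V) (r : ℕ) (y : V) :
    ρ.X ((AA ρ^r) y) = (AA ρ^r) (ρ.X y) :=
  comm_apply ((cXA ρ).pow_right r).eq y

lemma Chik (ρ : SSch1Verma d m V) (k : ℕ) (y : V) :
    ρ.Chi ((ρ.G^k) y) = (ρ.G^k) (ρ.Chi y) :=
  comm_apply ((show Commute ρ.Chi ρ.G from ρ.chi_G).pow_right k).eq y

lemma Chir (ρ : SSch1Verma d m V) (r : ℕ) (y : V) :
    ρ.Chi ((AA ρ^r) y) = (AA ρ^r) (ρ.Chi y) :=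
  comm_apply ((cChiA ρ).pow_right r).eq y

lemma Spk (ρ : SSch1Verma d m V) (k : ℕ) (y : V) :
    Sp ρ ((ρ.G^k) y) = (ρ.G^k) (Sp ρ y) := by
  refine comm_apply ?_ y
  have : Commute (Sp ρ) ρ.G := by
    unfold Sp
    exact (show Commute ρ.S ρ.G from ρ.rel_SG).sub_left
      (((show Commute ρ.G ρ.G from rfl).mul_left (show Commute ρ.X ρ.G from ρ.rel_XG)).smul_left _)
  exact (this.pow_right k).eq

lemma Spr (ρ : SSch1Verma d m V) (r : ℕ) (y : V) :
    Sp ρ ((AA ρ^r) y) = (AA ρ^r) (Sp ρ y) :=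
  comm_apply ((cSpA ρ).pow_right r).eq y

lemma Ak (ρ : SSch1Verma d m V) (k : ℕ) (y : V) :
    AA ρ ((ρ.G^k) y) = (ρ.G^k) (AA ρ y) :=
  comm_apply ((cGA ρ).symm.pow_right k).eq y

lemma Pk (ρ : SSch1Verma d m V) (k : ℕ) (y : V) :
    ρ.P ((ρ.G^k) y) = (ρ.G^k) (ρ.P y) + ((k:ℂ)*m) • (ρ.G^(k-1)) y := by
  cases k with
  | zero => simp
  | succ k =>
    have := congrArg (fun T : Module.End ℂ V => T y) (oPGpow ρ k)
    simp only [Module.End.mul_apply, LinearMap.add_apply, LinearMap.smul_apply] at this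
    rw [this]
    push_cast
    simp

lemma Pr (ρ : SSch1Verma d m V) (r : ℕ) (y : V) :
    ρ.P ((AA ρ^r) y) = (AA ρ^r) (ρ.P y) :=
  comm_apply ((cPA ρ).pow_right r).eq y

lemma Qk (ρ : SSch1Verma d m V) (k : ℕ) (y : V) :
    ρ.Q ((ρ.G^k) y) = (ρ.G^k) (ρ.Q y) + (k:ℂ) • (ρ.G^(k-1)) (ρ.X y) := by
  cases k with
  | zero => simp
  | succ k =>
    have := congrArg (fun T : Module.End ℂ V => T y) (oQGpow ρ k)
    simp only [Module.End.mul_apply, LinearMap.add_apply, LinearMap.smul_apply] at this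
    rw [this]
    push_cast
    simp

lemma Qr (ρ : SSch1Verma d m V) (hm : m ≠ 0) (r : ℕ) (y : V) :
    ρ.Q ((AA ρ^r) y) = (AA ρ^r) (ρ.Q y) + (-((r:ℂ)*(2*m))) • (AA ρ^(r-1)) (Sp ρ y) := by
  cases r with
  | zero => simp
  | succ r =>
    have := congrArg (fun T : Module.End ℂ V => T y) (oQApow ρ hm r)
    simp only [Module.End.mul_apply, LinearMap.sub_apply, LinearMap.smul_apply] at this
    rw [this]
    push_cast
    try simp only [Nat.add_sub_cancel]
    module

end S7

namespace S7
variable {d m : ℂ} {V : Type*} [AddCommGroup V] [Module ℂ V]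

lemma F_G (ρ : SSch1Verma d m V) (k r : ℕ) (e c : Bool) :
    ρ.G (Ff ρ (k,r,e,c)) = Ff ρ (k+1,r,e,c) := by
  show ρ.G ((ρ.G^k) _) = (ρ.G^(k+1)) _
  rw [app_pow_succ]

lemma F_A (ρ : SSch1Verma d m V) (k r : ℕ) (e c : Bool) :
    AA ρ (Ff ρ (k,r,e,c)) = Ff ρ (k,r+1,e,c) := by
  show AA ρ ((ρ.G^k) ((AA ρ^r) _)) = (ρ.G^k) ((AA ρ^(r+1)) _)
  rw [Ak, app_pow_succ]

lemma F_Sp0 (ρ : SSch1Verma d m V) (k r : ℕ) (c : Bool) :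
    Sp ρ (Ff ρ (k,r,false,c)) = Ff ρ (k,r,true,c) := by
  show Sp ρ ((ρ.G^k) ((AA ρ^r) ((if c then ρ.Chi else 1) ρ.v0)))
      = (ρ.G^k) ((AA ρ^r) (Sp ρ ((if c then ρ.Chi else 1) ρ.v0)))
  rw [Spk, Spr]

lemma F_Sp1 (ρ : SSch1Verma d m V) (hm : m ≠ 0) (k r : ℕ) (c : Bool) :
    Sp ρ (Ff ρ (k,r,true,c)) = (1/(2*m)) • Ff ρ (k,r+1,false,c) := by
  show Sp ρ ((ρ.G^k) ((AA ρ^r) (Sp ρ ((if c then ρ.Chi else 1) ρ.v0))))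
      = (1/(2*m)) • ((ρ.G^k) ((AA ρ^(r+1)) ((if c then ρ.Chi else 1) ρ.v0)))
  rw [Spk, Spr,
    show Sp ρ (Sp ρ ((if c then ρ.Chi else 1) ρ.v0))
        = (1/(2*m)) • (AA ρ ((if c then ρ.Chi else 1) ρ.v0)) from by
      rw [← Module.End.mul_apply, oSpSp ρ hm]; rfl,
    map_smul, map_smul, app_pow_succ']

lemma F_Chi0 (ρ : SSch1Verma d m V) (k r : ℕ) :
    ρ.Chi (Ff ρ (k,r,false,false)) = Ff ρ (k,r,false,true) := by
  show ρ.Chi ((ρ.G^k) ((AA ρ^r) ρ.v0)) = (ρ.G^k) ((AA ρ^r) (ρ.Chi ρ.v0))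
  rw [Chik, Chir]

lemma F_Chi1 (ρ : SSch1Verma d m V) (k r : ℕ) :
    ρ.Chi (Ff ρ (k,r,false,true)) = (m/2) • Ff ρ (k,r,false,false) := by
  show ρ.Chi ((ρ.G^k) ((AA ρ^r) (ρ.Chi ρ.v0))) = (m/2) • ((ρ.G^k) ((AA ρ^r) ρ.v0))
  rw [Chik, Chir, vChi2, map_smul, map_smul]

lemma F_Chi2 (ρ : SSch1Verma d m V) (k r : ℕ) :
    ρ.Chi (Ff ρ (k,r,true,false)) = -Ff ρ (k,r,true,true) := by
  show ρ.Chi ((ρ.G^k) ((AA ρ^r) (Sp ρ ρ.v0))) = -((ρ.G^k) ((AA ρ^r) (Sp ρ (ρ.Chi ρ.v0))))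
  rw [Chik, Chir, acomm_apply (oChiSp ρ), map_neg, map_neg]

lemma F_Chi3 (ρ : SSch1Verma d m V) (k r : ℕ) :
    ρ.Chi (Ff ρ (k,r,true,true)) = (-(m/2)) • Ff ρ (k,r,true,false) := by
  show ρ.Chi ((ρ.G^k) ((AA ρ^r) (Sp ρ (ρ.Chi ρ.v0))))
      = (-(m/2)) • ((ρ.G^k) ((AA ρ^r) (Sp ρ ρ.v0)))
  rw [Chik, Chir, acomm_apply (oChiSp ρ), vChi2]
  simp only [map_neg, map_smul]
  module

lemma F_X0 (ρ : SSch1Verma d m V) (k r : ℕ) :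
    ρ.X (Ff ρ (k,r,false,false)) = Ff ρ (k,r,false,true) := by
  show ρ.X ((ρ.G^k) ((AA ρ^r) ρ.v0)) = (ρ.G^k) ((AA ρ^r) (ρ.Chi ρ.v0))
  rw [Xk, Xr, ρ.lw_X]

lemma F_X1 (ρ : SSch1Verma d m V) (k r : ℕ) :
    ρ.X (Ff ρ (k,r,false,true)) = (-(m/2)) • Ff ρ (k,r,false,false) := by
  show ρ.X ((ρ.G^k) ((AA ρ^r) (ρ.Chi ρ.v0))) = (-(m/2)) • ((ρ.G^k) ((AA ρ^r) ρ.v0))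
  rw [Xk, Xr, vX1, map_smul, map_smul]

lemma F_X2 (ρ : SSch1Verma d m V) (hm : m ≠ 0) (k r : ℕ) :
    ρ.X (Ff ρ (k,r,true,false)) = -Ff ρ (k,r,true,true) := by
  show ρ.X ((ρ.G^k) ((AA ρ^r) (Sp ρ ρ.v0))) = -((ρ.G^k) ((AA ρ^r) (Sp ρ (ρ.Chi ρ.v0))))
  rw [Xk, Xr, acomm_apply (oXSp ρ hm), ρ.lw_X, map_neg, map_neg]

lemma F_X3 (ρ : SSch1Verma d m V) (hm : m ≠ 0) (k r : ℕ) :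
    ρ.X (Ff ρ (k,r,true,true)) = (m/2) • Ff ρ (k,r,true,false) := by
  show ρ.X ((ρ.G^k) ((AA ρ^r) (Sp ρ (ρ.Chi ρ.v0))))
      = (m/2) • ((ρ.G^k) ((AA ρ^r) (Sp ρ ρ.v0)))
  rw [Xk, Xr, acomm_apply (oXSp ρ hm), vX1]
  simp only [map_neg, map_smul]
  module

lemma P_inner (ρ : SSch1Verma d m V) (hm : m ≠ 0) (r : ℕ) (e c : Bool) :
    ρ.P ((AA ρ^r) ((if e then Sp ρ else 1) ((if c then ρ.Chi else 1) ρ.v0))) = 0 := by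
  rw [Pr]
  cases e <;> cases c <;>
    simp [comm_apply (cPSp ρ hm).eq, vP1, ρ.lw_P]

lemma F_P (ρ : SSch1Verma d m V) (hm : m ≠ 0) (k r : ℕ) (e c : Bool) :
    ρ.P (Ff ρ (k,r,e,c)) = ((k:ℂ)*m) • Ff ρ (k-1,r,e,c) := by
  show ρ.P ((ρ.G^k) _) = _
  rw [Pk, P_inner ρ hm, map_zero, zero_add]
  rfl

lemma Q_Ar (ρ : SSch1Verma d m V) (hm : m ≠ 0) (r : ℕ) (u : V) (hQ : ρ.Q u = 0) :
    ρ.Q ((AA ρ^r) u) = (-((r:ℂ)*(2*m))) • (AA ρ^(r-1)) (Sp ρ u) := by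
  rw [Qr ρ hm, hQ, map_zero, zero_add]

lemma QSp_u (ρ : SSch1Verma d m V) (hm : m ≠ 0) (u : V)
    (hQ : ρ.Q u = 0) (hP : ρ.P u = 0) (hD : ρ.D u = (-d) • u) :
    ρ.Q (Sp ρ u) = (d + 1/2) • u := by
  have h := congrArg (fun T : Module.End ℂ V => T u) (oQSp ρ hm)
  simp only [Module.End.mul_apply, LinearMap.add_apply, LinearMap.neg_apply,
    LinearMap.smul_apply, Module.End.one_apply] at h
  rw [hQ, hP, hD, map_zero, map_zero, smul_zero, add_zero] at h
  rw [h]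
  module

lemma Q_ArSp (ρ : SSch1Verma d m V) (hm : m ≠ 0) (r : ℕ) (u : V)
    (hQ : ρ.Q u = 0) (hP : ρ.P u = 0) (hD : ρ.D u = (-d) • u) :
    ρ.Q ((AA ρ^r) (Sp ρ u)) = ((d + 1/2) - (r:ℂ)) • (AA ρ^r) u := by
  cases r with
  | zero => simpa using QSp_u ρ hm u hQ hP hD
  | succ r =>
    rw [Qr ρ hm, QSp_u ρ hm u hQ hP hD, map_smul,
      show Sp ρ (Sp ρ u) = (1/(2*m)) • AA ρ u from by
        rw [← Module.End.mul_apply, oSpSp ρ hm]; rfl,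
      map_smul, Nat.add_sub_cancel, ← app_pow_succ']
    push_cast
    match_scalars <;> (try field_simp) <;> try ring

lemma F_Q00 (ρ : SSch1Verma d m V) (hm : m ≠ 0) (k r : ℕ) :
    ρ.Q (Ff ρ (k,r,false,false)) = (-((r:ℂ)*(2*m))) • Ff ρ (k,r-1,true,false)
      + (k:ℂ) • Ff ρ (k-1,r,false,true) := by
  show ρ.Q ((ρ.G^k) ((AA ρ^r) ρ.v0)) = _
  rw [Qk, Q_Ar ρ hm r ρ.v0 ρ.lw_Q, map_smul, Xr, ρ.lw_X]
  rfl

lemma F_Q01 (ρ : SSch1Verma d m V) (hm : m ≠ 0) (k r : ℕ) :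
    ρ.Q (Ff ρ (k,r,false,true)) = (-((r:ℂ)*(2*m))) • Ff ρ (k,r-1,true,true)
      + (-((k:ℂ)*(m/2))) • Ff ρ (k-1,r,false,false) := by
  show ρ.Q ((ρ.G^k) ((AA ρ^r) (ρ.Chi ρ.v0))) = _
  rw [Qk, Q_Ar ρ hm r _ (vQ1 ρ), map_smul, Xr, vX1]
  simp only [map_neg, map_smul]
  show _ = (-((r:ℂ)*(2*m))) • ((ρ.G^k) ((AA ρ^(r-1)) (Sp ρ (ρ.Chi ρ.v0))))
      + (-((k:ℂ)*(m/2))) • ((ρ.G^(k-1)) ((AA ρ^r) ρ.v0))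
  module

lemma F_Q10 (ρ : SSch1Verma d m V) (hm : m ≠ 0) (k r : ℕ) :
    ρ.Q (Ff ρ (k,r,true,false)) = ((d + 1/2) - (r:ℂ)) • Ff ρ (k,r,false,false)
      + (-(k:ℂ)) • Ff ρ (k-1,r,true,true) := by
  show ρ.Q ((ρ.G^k) ((AA ρ^r) (Sp ρ ρ.v0))) = _
  rw [Qk, Q_ArSp ρ hm r ρ.v0 ρ.lw_Q ρ.lw_P ρ.lw_D, map_smul, Xr,
    acomm_apply (oXSp ρ hm), ρ.lw_X]
  simp only [map_neg, map_smul]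
  show _ = ((d + 1/2) - (r:ℂ)) • ((ρ.G^k) ((AA ρ^r) ρ.v0))
      + (-(k:ℂ)) • ((ρ.G^(k-1)) ((AA ρ^r) (Sp ρ (ρ.Chi ρ.v0))))
  module

lemma F_Q11 (ρ : SSch1Verma d m V) (hm : m ≠ 0) (k r : ℕ) :
    ρ.Q (Ff ρ (k,r,true,true)) = ((d + 1/2) - (r:ℂ)) • Ff ρ (k,r,false,true)
      + ((k:ℂ)*(m/2)) • Ff ρ (k-1,r,true,false) := by
  show ρ.Q ((ρ.G^k) ((AA ρ^r) (Sp ρ (ρ.Chi ρ.v0)))) = _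
  rw [Qk, Q_ArSp ρ hm r _ (vQ1 ρ) (vP1 ρ) (vD1 ρ), map_smul, Xr,
    acomm_apply (oXSp ρ hm), vX1]
  simp only [map_neg, map_smul]
  show _ = ((d + 1/2) - (r:ℂ)) • ((ρ.G^k) ((AA ρ^r) (ρ.Chi ρ.v0)))
      + ((k:ℂ)*(m/2)) • ((ρ.G^(k-1)) ((AA ρ^r) (Sp ρ ρ.v0)))
  module

end S7

namespace S7
variable {d m : ℂ} {V : Type*} [AddCommGroup V] [Module ℂ V]

/-- the `r + ε` weight that controls membership in the submodule `I`. -/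
def wt (i : ι) : ℕ := i.2.1 + (if i.2.2.1 then 1 else 0)

/-- the submodule `I` generated by the singular vector, described explicitly. -/
noncomputable def II (ρ : SSch1Verma d m V) (p : ℕ) : Submodule ℂ V :=
  Submodule.span ℂ (Ff ρ '' {i | p < wt i})

lemma wt_t (k r : ℕ) (c : Bool) : wt (k,r,true,c) = r + 1 := rfl
lemma wt_f (k r : ℕ) (c : Bool) : wt (k,r,false,c) = r := rfl

lemma mem_II_of (ρ : SSch1Verma d m V) {p : ℕ} {i : ι} (h : p < wt i) :
    Ff ρ i ∈ II ρ p :=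
  Submodule.subset_span ⟨i, h, rfl⟩

lemma closed_under {T : Module.End ℂ V} {s : Set V}
    (h : ∀ v ∈ s, T v ∈ Submodule.span ℂ s) :
    ∀ w ∈ Submodule.span ℂ s, T w ∈ Submodule.span ℂ s := by
  intro w hw
  have h1 := Submodule.apply_mem_span_image_of_mem_span (f := T) hw
  refine Submodule.span_le.mpr ?_ h1
  rintro y ⟨v, hv, rfl⟩
  exact h v hv

-- applied versions of operator combinations
lemma vAA (ρ : SSch1Verma d m V) (v : V) :
    AA ρ v = ρ.G (ρ.G v) - (2*m) • ρ.K v := by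
  simp [AA, LinearMap.sub_apply, Module.End.mul_apply, LinearMap.smul_apply]

lemma vSp (ρ : SSch1Verma d m V) (v : V) :
    Sp ρ v = ρ.S v - (1/m) • ρ.G (ρ.X v) := by
  simp [Sp, LinearMap.sub_apply, Module.End.mul_apply, LinearMap.smul_apply]

lemma vS (ρ : SSch1Verma d m V) (v : V) :
    ρ.S v = Sp ρ v + (1/m) • ρ.G (ρ.X v) := by
  rw [vSp]; abel

lemma vK (ρ : SSch1Verma d m V) (hm : m ≠ 0) (v : V) :
    ρ.K v = (1/(2*m)) • (ρ.G (ρ.G v) - AA ρ v) := by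
  rw [vAA]
  rw [show ρ.G (ρ.G v) - (ρ.G (ρ.G v) - (2*m) • ρ.K v) = (2*m) • ρ.K v from by abel,
    smul_smul]
  rw [show (1/(2*m)) * (2*m) = (1:ℂ) from by field_simp]
  rw [one_smul]

-- closure of II under the various operators
lemma II_G (ρ : SSch1Verma d m V) (p : ℕ) : ∀ w ∈ II ρ p, ρ.G w ∈ II ρ p := by
  refine closed_under ?_
  rintro v ⟨⟨k,r,e,c⟩, hi, rfl⟩
  rw [F_G]
  exact mem_II_of ρ hi

lemma II_A (ρ : SSch1Verma d m V) (p : ℕ) : ∀ w ∈ II ρ p, AA ρ w ∈ II ρ p := by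
  refine closed_under ?_
  rintro v ⟨⟨k,r,e,c⟩, hi, rfl⟩
  rw [F_A]
  refine mem_II_of ρ ?_
  cases e <;> simp only [wt_t, wt_f, Set.mem_setOf_eq] at hi ⊢ <;> omega

lemma II_Chi (ρ : SSch1Verma d m V) (p : ℕ) : ∀ w ∈ II ρ p, ρ.Chi w ∈ II ρ p := by
  refine closed_under ?_
  rintro v ⟨⟨k,r,e,c⟩, hi, rfl⟩
  cases e <;> cases c
  · rw [F_Chi0]; exact mem_II_of ρ hi
  · rw [F_Chi1]; exact Submodule.smul_mem _ _ (mem_II_of ρ hi)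
  · rw [F_Chi2]; exact Submodule.neg_mem _ (mem_II_of ρ hi)
  · rw [F_Chi3]; exact Submodule.smul_mem _ _ (mem_II_of ρ hi)

lemma II_X (ρ : SSch1Verma d m V) (hm : m ≠ 0) (p : ℕ) :
    ∀ w ∈ II ρ p, ρ.X w ∈ II ρ p := by
  refine closed_under ?_
  rintro v ⟨⟨k,r,e,c⟩, hi, rfl⟩
  cases e <;> cases c
  · rw [F_X0]; exact mem_II_of ρ hi
  · rw [F_X1]; exact Submodule.smul_mem _ _ (mem_II_of ρ hi)
  · rw [F_X2 ρ hm]; exact Submodule.neg_mem _ (mem_II_of ρ hi)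
  · rw [F_X3 ρ hm]; exact Submodule.smul_mem _ _ (mem_II_of ρ hi)

lemma II_Sp (ρ : SSch1Verma d m V) (hm : m ≠ 0) (p : ℕ) :
    ∀ w ∈ II ρ p, Sp ρ w ∈ II ρ p := by
  refine closed_under ?_
  rintro v ⟨⟨k,r,e,c⟩, hi, rfl⟩
  cases e
  · rw [F_Sp0]
    refine mem_II_of ρ ?_
    simp only [wt_t, wt_f, Set.mem_setOf_eq] at hi ⊢
    omega
  · rw [F_Sp1 ρ hm]
    refine Submodule.smul_mem _ _ (mem_II_of ρ ?_)
    simp only [wt_t, wt_f, Set.mem_setOf_eq] at hi ⊢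
    omega

lemma II_S (ρ : SSch1Verma d m V) (hm : m ≠ 0) (p : ℕ) :
    ∀ w ∈ II ρ p, ρ.S w ∈ II ρ p := by
  intro w hw
  rw [vS]
  exact Submodule.add_mem _ (II_Sp ρ hm p w hw)
    (Submodule.smul_mem _ _ (II_G ρ p _ (II_X ρ hm p w hw)))

lemma II_Q (ρ : SSch1Verma d m V) (hm : m ≠ 0) (p : ℕ) (hd : d = (p:ℂ) - 1/2) :
    ∀ w ∈ II ρ p, ρ.Q w ∈ II ρ p := by
  refine closed_under ?_
  rintro v ⟨⟨k,r,e,c⟩, hi, rfl⟩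
  simp only [Set.mem_setOf_eq] at hi
  cases e
  · -- r > p, so r ≥ 1 and r - 1 + 1 = r > p
    rw [wt_f] at hi
    have h1 : ∀ c' : Bool, p < wt (k, r-1, true, c') := by
      intro c'; rw [wt_t]; omega
    have h2 : ∀ c' : Bool, p < wt (k-1, r, false, c') := by
      intro c'; rw [wt_f]; omega
    cases c
    · rw [F_Q00 ρ hm]
      exact Submodule.add_mem _ (Submodule.smul_mem _ _ (mem_II_of ρ (h1 false)))
        (Submodule.smul_mem _ _ (mem_II_of ρ (h2 true)))
    · rw [F_Q01 ρ hm]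
      exact Submodule.add_mem _ (Submodule.smul_mem _ _ (mem_II_of ρ (h1 true)))
        (Submodule.smul_mem _ _ (mem_II_of ρ (h2 false)))
  · -- r ≥ p here
    rw [wt_t] at hi
    have hrp : p ≤ r := by omega
    have h2 : ∀ c' : Bool, p < wt (k-1, r, true, c') := by
      intro c'; rw [wt_t]; omega
    have hcase : ∀ c' : Bool, ((d + 1/2) - (r:ℂ)) • Ff ρ (k,r,false,c') ∈ II ρ p := by
      intro c'
      rcases eq_or_lt_of_le hrp with h | h
      · have : (d + 1/2) - (r:ℂ) = 0 := by rw [hd, ← h]; ring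
        rw [this, zero_smul]
        exact Submodule.zero_mem _
      · refine Submodule.smul_mem _ _ (mem_II_of ρ ?_)
        rw [wt_f]
        exact_mod_cast h
    cases c
    · rw [F_Q10 ρ hm]
      exact Submodule.add_mem _ (hcase false) (Submodule.smul_mem _ _ (mem_II_of ρ (h2 true)))
    · rw [F_Q11 ρ hm]
      exact Submodule.add_mem _ (hcase true) (Submodule.smul_mem _ _ (mem_II_of ρ (h2 false)))

/-- A subspace closed under Q, S, X, Chi is invariant. -/
lemma invariant_of (ρ : SSch1Verma d m V) (W : Submodule ℂ V)
    (hQ : ∀ w ∈ W, ρ.Q w ∈ W) (hS : ∀ w ∈ W, ρ.S w ∈ W)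
    (hX : ∀ w ∈ W, ρ.X w ∈ W) (hC : ∀ w ∈ W, ρ.Chi w ∈ W) :
    ρ.Invariant W := by
  have keyH : ∀ w : V, ρ.H w = -(ρ.Q (ρ.Q w)) := by
    intro w
    have := congrArg (fun T : Module.End ℂ V => T w) (oQQ ρ)
    simp only [Module.End.mul_apply, LinearMap.neg_apply] at this
    rw [this, neg_neg]
  have keyP : ∀ w : V, ρ.P w = -(ρ.Q (ρ.X w) + ρ.X (ρ.Q w)) := by
    intro w
    have := congrArg (fun T : Module.End ℂ V => T w) ρ.rel_QX
    simp only [LinearMap.add_apply, Module.End.mul_apply, LinearMap.neg_apply] at this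
    rw [this, neg_neg]
  have keyD : ∀ w : V, ρ.D w = -(ρ.Q (ρ.S w) + ρ.S (ρ.Q w)) := by
    intro w
    have := congrArg (fun T : Module.End ℂ V => T w) ρ.rel_QS
    simp only [LinearMap.add_apply, Module.End.mul_apply, LinearMap.neg_apply] at this
    rw [this, neg_neg]
  have keyG : ∀ w : V, ρ.G w = -(ρ.S (ρ.X w) + ρ.X (ρ.S w)) := by
    intro w
    have := congrArg (fun T : Module.End ℂ V => T w) ρ.rel_SX
    simp only [LinearMap.add_apply, Module.End.mul_apply, LinearMap.neg_apply] at this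
    rw [this, neg_neg]
  have keyK : ∀ w : V, ρ.K w = -(ρ.S (ρ.S w)) := by
    intro w
    have := congrArg (fun T : Module.End ℂ V => T w) (oSS ρ)
    simp only [Module.End.mul_apply, LinearMap.neg_apply] at this
    rw [this, neg_neg]
  intro w hw
  refine ⟨?_, ?_, ?_, ?_, ?_, ?_, ?_, ?_, ?_, ?_⟩
  · rw [keyH]; exact Submodule.neg_mem _ (hQ _ (hQ _ hw))
  · rw [keyP]; exact Submodule.neg_mem _ (Submodule.add_mem _ (hQ _ (hX _ hw)) (hX _ (hQ _ hw)))
  · rw [keyG]; exact Submodule.neg_mem _ (Submodule.add_mem _ (hS _ (hX _ hw)) (hX _ (hS _ hw)))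
  · rw [keyD]; exact Submodule.neg_mem _ (Submodule.add_mem _ (hQ _ (hS _ hw)) (hS _ (hQ _ hw)))
  · rw [keyK]; exact Submodule.neg_mem _ (hS _ (hS _ hw))
  · rw [M_apply]; exact Submodule.smul_mem _ _ hw
  · exact hQ _ hw
  · exact hS _ hw
  · exact hX _ hw
  · exact hC _ hw

lemma II_invariant (ρ : SSch1Verma d m V) (hm : m ≠ 0) (p : ℕ) (hd : d = (p:ℂ) - 1/2) :
    ρ.Invariant (II ρ p) :=
  invariant_of ρ _ (II_Q ρ hm p hd) (II_S ρ hm p) (II_X ρ hm p) (II_Chi ρ p)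

end S7

namespace S7
variable {d m : ℂ} {V : Type*} [AddCommGroup V] [Module ℂ V]

lemma mem_spanF (ρ : SSch1Verma d m V) (i : ι) :
    Ff ρ i ∈ Submodule.span ℂ (Set.range (Ff ρ)) :=
  Submodule.subset_span ⟨i, rfl⟩

lemma spanF_G (ρ : SSch1Verma d m V) :
    ∀ w ∈ Submodule.span ℂ (Set.range (Ff ρ)), ρ.G w ∈ Submodule.span ℂ (Set.range (Ff ρ)) := by
  refine closed_under ?_
  rintro v ⟨⟨k,r,e,c⟩, rfl⟩
  rw [F_G]; exact mem_spanF ρ _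

lemma spanF_A (ρ : SSch1Verma d m V) :
    ∀ w ∈ Submodule.span ℂ (Set.range (Ff ρ)), AA ρ w ∈ Submodule.span ℂ (Set.range (Ff ρ)) := by
  refine closed_under ?_
  rintro v ⟨⟨k,r,e,c⟩, rfl⟩
  rw [F_A]; exact mem_spanF ρ _

lemma spanF_Chi (ρ : SSch1Verma d m V) :
    ∀ w ∈ Submodule.span ℂ (Set.range (Ff ρ)), ρ.Chi w ∈ Submodule.span ℂ (Set.range (Ff ρ)) := by
  refine closed_under ?_
  rintro v ⟨⟨k,r,e,c⟩, rfl⟩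
  cases e <;> cases c
  · rw [F_Chi0]; exact mem_spanF ρ _
  · rw [F_Chi1]; exact Submodule.smul_mem _ _ (mem_spanF ρ _)
  · rw [F_Chi2]; exact Submodule.neg_mem _ (mem_spanF ρ _)
  · rw [F_Chi3]; exact Submodule.smul_mem _ _ (mem_spanF ρ _)

lemma spanF_X (ρ : SSch1Verma d m V) (hm : m ≠ 0) :
    ∀ w ∈ Submodule.span ℂ (Set.range (Ff ρ)), ρ.X w ∈ Submodule.span ℂ (Set.range (Ff ρ)) := by
  refine closed_under ?_
  rintro v ⟨⟨k,r,e,c⟩, rfl⟩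
  cases e <;> cases c
  · rw [F_X0]; exact mem_spanF ρ _
  · rw [F_X1]; exact Submodule.smul_mem _ _ (mem_spanF ρ _)
  · rw [F_X2 ρ hm]; exact Submodule.neg_mem _ (mem_spanF ρ _)
  · rw [F_X3 ρ hm]; exact Submodule.smul_mem _ _ (mem_spanF ρ _)

lemma spanF_Sp (ρ : SSch1Verma d m V) (hm : m ≠ 0) :
    ∀ w ∈ Submodule.span ℂ (Set.range (Ff ρ)), Sp ρ w ∈ Submodule.span ℂ (Set.range (Ff ρ)) := by
  refine closed_under ?_
  rintro v ⟨⟨k,r,e,c⟩, rfl⟩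
  cases e
  · rw [F_Sp0]; exact mem_spanF ρ _
  · rw [F_Sp1 ρ hm]; exact Submodule.smul_mem _ _ (mem_spanF ρ _)

lemma spanF_S (ρ : SSch1Verma d m V) (hm : m ≠ 0) :
    ∀ w ∈ Submodule.span ℂ (Set.range (Ff ρ)), ρ.S w ∈ Submodule.span ℂ (Set.range (Ff ρ)) := by
  intro w hw
  rw [vS]
  exact Submodule.add_mem _ (spanF_Sp ρ hm w hw)
    (Submodule.smul_mem _ _ (spanF_G ρ _ (spanF_X ρ hm w hw)))

lemma spanF_K (ρ : SSch1Verma d m V) (hm : m ≠ 0) :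
    ∀ w ∈ Submodule.span ℂ (Set.range (Ff ρ)), ρ.K w ∈ Submodule.span ℂ (Set.range (Ff ρ)) := by
  intro w hw
  rw [vK ρ hm]
  exact Submodule.smul_mem _ _ (Submodule.sub_mem _ (spanF_G ρ _ (spanF_G ρ _ hw)) (spanF_A ρ _ hw))

lemma Ff_000 (ρ : SSch1Verma d m V) : Ff ρ (0,0,false,false) = ρ.v0 := by
  show (ρ.G^0) ((AA ρ^0) ρ.v0) = ρ.v0
  simp

lemma spanF_top (ρ : SSch1Verma d m V) (hm : m ≠ 0) :
    Submodule.span ℂ (Set.range (Ff ρ)) = ⊤ := by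
  refine top_unique ?_
  rw [← ρ.pbw_span]
  refine Submodule.span_le.mpr ?_
  rintro x ⟨i, rfl⟩
  obtain ⟨k, l, e, c⟩ := i
  show (ρ.G ^ k * ρ.K ^ l * (if e then ρ.S else 1) * (if c then ρ.Chi else 1)) ρ.v0 ∈ _
  simp only [Module.End.mul_apply]
  have h0 : ρ.v0 ∈ Submodule.span ℂ (Set.range (Ff ρ)) := by
    rw [← Ff_000 ρ]; exact mem_spanF ρ _
  have hc : (if c then ρ.Chi else 1) ρ.v0 ∈ Submodule.span ℂ (Set.range (Ff ρ)) := by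
    cases c
    · simpa using h0
    · simpa using spanF_Chi ρ _ h0
  have he : (if e then ρ.S else 1) ((if c then ρ.Chi else 1) ρ.v0)
      ∈ Submodule.span ℂ (Set.range (Ff ρ)) := by
    cases e
    · simpa using hc
    · simpa using spanF_S ρ hm _ hc
  have hl : ∀ (l' : ℕ) (y : V), y ∈ Submodule.span ℂ (Set.range (Ff ρ)) →
      (ρ.K^l') y ∈ Submodule.span ℂ (Set.range (Ff ρ)) := by
    intro l'
    induction l' with
    | zero => intro y hy; simpa using hy
    | succ l' ih =>
      intro y hy
      rw [app_pow_succ]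
      exact spanF_K ρ hm _ (ih y hy)
  have hk : ∀ (k' : ℕ) (y : V), y ∈ Submodule.span ℂ (Set.range (Ff ρ)) →
      (ρ.G^k') y ∈ Submodule.span ℂ (Set.range (Ff ρ)) := by
    intro k'
    induction k' with
    | zero => intro y hy; simpa using hy
    | succ k' ih =>
      intro y hy
      rw [app_pow_succ]
      exact spanF_G ρ _ (ih y hy)
  exact hk k _ (hl l _ he)

-- gen machinery
lemma gen_invariant (ρ : SSch1Verma d m V) (s : Set V) : ρ.Invariant (ρ.gen s) := by
  intro w hw
  refine ⟨?_, ?_, ?_, ?_, ?_, ?_, ?_, ?_, ?_, ?_⟩ <;>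
    · refine Submodule.mem_sInf.mpr fun W hW => ?_
      have hmem := Submodule.mem_sInf.mp hw W hW
      have hall := hW.1 w hmem
      tauto

lemma subset_gen (ρ : SSch1Verma d m V) (s : Set V) : s ⊆ ρ.gen s := by
  intro x hx
  exact Submodule.mem_sInf.mpr fun W hW => hW.2 hx

lemma gen_le (ρ : SSch1Verma d m V) (s : Set V) (W : Submodule ℂ V)
    (hW : ρ.Invariant W) (hsW : s ⊆ W) : ρ.gen s ≤ W :=
  sInf_le ⟨hW, hsW⟩

lemma vs_eq (ρ : SSch1Verma d m V) (hm : m ≠ 0) (p : ℕ) :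
    (((ρ.G * ρ.G - (2 * m) • ρ.K) ^ p) (ρ.G ρ.v0 - (2 : ℂ) • ρ.Chi (ρ.S ρ.v0)))
      = (2:ℂ) • Ff ρ (0,p,true,true) := by
  have hB : ρ.G ρ.v0 - (2:ℂ) • ρ.Chi (ρ.S ρ.v0) = (2:ℂ) • Sp ρ (ρ.Chi ρ.v0) := by
    rw [vSp ρ (ρ.Chi ρ.v0), vX1, acomm_apply (oSChi ρ), map_smul]
    match_scalars <;> (try field_simp) <;> try ring
  show (AA ρ ^ p) (ρ.G ρ.v0 - (2 : ℂ) • ρ.Chi (ρ.S ρ.v0)) = _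
  rw [hB, map_smul]
  congr 1

lemma gen_eq_II (ρ : SSch1Verma d m V) (hm : m ≠ 0) (p : ℕ) (hd : d = (p:ℂ) - 1/2) :
    ρ.gen {(((ρ.G * ρ.G - (2 * m) • ρ.K) ^ p) (ρ.G ρ.v0 - (2 : ℂ) • ρ.Chi (ρ.S ρ.v0)))}
      = II ρ p := by
  refine le_antisymm ?_ ?_
  · refine gen_le ρ _ _ (II_invariant ρ hm p hd) ?_
    intro x hx
    rw [Set.mem_singleton_iff] at hx
    subst hx
    rw [vs_eq ρ hm p]
    exact Submodule.smul_mem _ _ (mem_II_of ρ (by rw [wt_t]; omega))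
  · set g := ρ.gen {(((ρ.G * ρ.G - (2 * m) • ρ.K) ^ p) (ρ.G ρ.v0 - (2 : ℂ) • ρ.Chi (ρ.S ρ.v0)))}
      with hg
    have hinv : ρ.Invariant g := gen_invariant ρ _
    have hGg : ∀ w ∈ g, ρ.G w ∈ g := fun w hw => (hinv w hw).2.2.1
    have hKg : ∀ w ∈ g, ρ.K w ∈ g := fun w hw => (hinv w hw).2.2.2.2.1
    have hSg : ∀ w ∈ g, ρ.S w ∈ g := fun w hw => (hinv w hw).2.2.2.2.2.2.2.1
    have hXg : ∀ w ∈ g, ρ.X w ∈ g := fun w hw => (hinv w hw).2.2.2.2.2.2.2.2.1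
    have hCg : ∀ w ∈ g, ρ.Chi w ∈ g := fun w hw => (hinv w hw).2.2.2.2.2.2.2.2.2
    have hAg : ∀ w ∈ g, AA ρ w ∈ g := by
      intro w hw
      rw [vAA]
      exact Submodule.sub_mem _ (hGg _ (hGg _ hw)) (Submodule.smul_mem _ _ (hKg _ hw))
    have hSpg : ∀ w ∈ g, Sp ρ w ∈ g := by
      intro w hw
      rw [vSp]
      exact Submodule.sub_mem _ (hSg _ hw) (Submodule.smul_mem _ _ (hGg _ (hXg _ hw)))
    have hvs : (((ρ.G * ρ.G - (2 * m) • ρ.K) ^ p) (ρ.G ρ.v0 - (2 : ℂ) • ρ.Chi (ρ.S ρ.v0))) ∈ g :=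
      subset_gen ρ _ rfl
    have base1 : Ff ρ (0,p,true,true) ∈ g := by
      have h2 : Ff ρ (0,p,true,true) = (2⁻¹:ℂ) •
          (((ρ.G * ρ.G - (2 * m) • ρ.K) ^ p) (ρ.G ρ.v0 - (2 : ℂ) • ρ.Chi (ρ.S ρ.v0))) := by
        rw [vs_eq ρ hm p, smul_smul]
        norm_num
      rw [h2]
      exact Submodule.smul_mem _ _ hvs
    have base0 : Ff ρ (0,p,true,false) ∈ g := by
      have h2 : Ff ρ (0,p,true,false) = (-(2/m)) • ρ.Chi (Ff ρ (0,p,true,true)) := by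
        rw [F_Chi3, smul_smul, show (-(2/m))*(-(m/2)) = (1:ℂ) from by field_simp, one_smul]
      rw [h2]
      exact Submodule.smul_mem _ _ (hCg _ base1)
    have hSe : ∀ r', p ≤ r' → ∀ c : Bool, Ff ρ (0,r',true,c) ∈ g := by
      intro r' hr'
      induction r', hr' using Nat.le_induction with
      | base => intro c; cases c; exacts [base0, base1]
      | succ r' hr' ih =>
        intro c
        rw [show ((0:ℕ),r'+1,true,c) = ((0:ℕ),r'+1,true,c) from rfl, ← F_A]
        exact hAg _ (ih c)
    have hS0 : ∀ r', p < r' → ∀ c : Bool, Ff ρ (0,r',false,c) ∈ g := by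
      intro r' hr' c
      obtain ⟨r'', rfl⟩ : ∃ r'', r' = r'' + 1 := ⟨r' - 1, by omega⟩
      have h2 : Ff ρ (0,r''+1,false,c) = (2*m) • Sp ρ (Ff ρ (0,r'',true,c)) := by
        rw [F_Sp1 ρ hm, smul_smul, show (2*m)*(1/(2*m)) = (1:ℂ) from by field_simp, one_smul]
      rw [h2]
      exact Submodule.smul_mem _ _ (hSpg _ (hSe r'' (by omega) c))
    have hk : ∀ (k' r' : ℕ) (e' c' : Bool), Ff ρ (0,r',e',c') ∈ g → Ff ρ (k',r',e',c') ∈ g := by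
      intro k'
      induction k' with
      | zero => intro r' e' c' h; exact h
      | succ k' ih =>
        intro r' e' c' h
        rw [← F_G]
        exact hGg _ (ih r' e' c' h)
    refine Submodule.span_le.mpr ?_
    rintro x ⟨⟨k,r,e,c⟩, hi, rfl⟩
    simp only [Set.mem_setOf_eq] at hi
    cases e
    · rw [wt_f] at hi
      exact hk k r false c (hS0 r hi c)
    · rw [wt_t] at hi
      exact hk k r true c (hSe r (by omega) c)

end S7

namespace S7
variable {d m : ℂ} {V : Type*} [AddCommGroup V] [Module ℂ V]

def lvl (i : ι) : ℕ := i.1 + 2*i.2.1 + (if i.2.2.1 then 1 else 0)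

lemma lvl_t (k r : ℕ) (c : Bool) : lvl (k,r,true,c) = k + 2*r + 1 := rfl
lemma lvl_f (k r : ℕ) (c : Bool) : lvl (k,r,false,c) = k + 2*r := rfl

lemma F_P' (ρ : SSch1Verma d m V) (hm : m ≠ 0) (i : ι) :
    ρ.P (Ff ρ i) = ((i.1:ℂ)*m) • Ff ρ (i.1 - 1, i.2) := by
  obtain ⟨k,r,e,c⟩ := i
  exact F_P ρ hm k r e c

lemma F_Q0f (ρ : SSch1Verma d m V) (hm : m ≠ 0) (r : ℕ) (c : Bool) :
    ρ.Q (Ff ρ (0,r,false,c)) = (-((r:ℂ)*(2*m))) • Ff ρ (0,r-1,true,c) := by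
  cases c
  · simpa using F_Q00 ρ hm 0 r
  · simpa using F_Q01 ρ hm 0 r

lemma F_Q0t (ρ : SSch1Verma d m V) (hm : m ≠ 0) (r : ℕ) (c : Bool) :
    ρ.Q (Ff ρ (0,r,true,c)) = ((d + 1/2) - (r:ℂ)) • Ff ρ (0,r,false,c) := by
  cases c
  · simpa using F_Q10 ρ hm 0 r
  · simpa using F_Q11 ρ hm 0 r

lemma Ff_001 (ρ : SSch1Verma d m V) : Ff ρ (0,0,false,true) = ρ.Chi ρ.v0 := by
  show (ρ.G^0) ((AA ρ^0) (ρ.Chi ρ.v0)) = ρ.Chi ρ.v0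
  simp

lemma level0_case (ρ : SSch1Verma d m V) (hm : m ≠ 0) (W : Submodule ℂ V)
    (hW : ρ.Invariant W) (c0 c1 : ℂ)
    (h : c0 • ρ.v0 + c1 • ρ.Chi ρ.v0 ∈ W) (hne : c0 ≠ 0 ∨ c1 ≠ 0) : ρ.v0 ∈ W := by
  by_cases hc1 : c1 = 0
  · have hc0 : c0 ≠ 0 := by tauto
    have h2 := W.smul_mem c0⁻¹ h
    rw [hc1, zero_smul, add_zero, smul_smul, inv_mul_cancel₀ hc0, one_smul] at h2
    exact h2
  · have hXw : ρ.X (c0 • ρ.v0 + c1 • ρ.Chi ρ.v0) ∈ W := (hW _ h).2.2.2.2.2.2.2.2.1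
    have hCw : ρ.Chi (c0 • ρ.v0 + c1 • ρ.Chi ρ.v0) ∈ W := (hW _ h).2.2.2.2.2.2.2.2.2
    have hdiff : ρ.Chi (c0 • ρ.v0 + c1 • ρ.Chi ρ.v0) - ρ.X (c0 • ρ.v0 + c1 • ρ.Chi ρ.v0)
        = (c1 * m) • ρ.v0 := by
      simp only [map_add, map_smul, vChi2, ρ.lw_X, vX1]
      module
    have h3 := W.sub_mem hCw hXw
    rw [hdiff] at h3
    have h4 := W.smul_mem (c1*m)⁻¹ h3
    rw [smul_smul, inv_mul_cancel₀ (mul_ne_zero hc1 hm), one_smul] at h4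
    exact h4

end S7

namespace S7
variable {d m : ℂ} {V : Type*} [AddCommGroup V] [Module ℂ V]

lemma engine (ρ : SSch1Verma d m V) (hm : m ≠ 0) (p : ℕ) (hd : d = (p:ℂ) - 1/2)
    (W : Submodule ℂ V) (hW : ρ.Invariant W) :
    ∀ (n : ℕ) (s : Finset ι) (co : ι → ℂ),
      (∀ i ∈ s, wt i ≤ p ∧ lvl i ≤ n) →
      (∑ i ∈ s, co i • Ff ρ i) ∈ W →
      (∃ i ∈ s, co i ≠ 0) → ρ.v0 ∈ W := by
  intro n
  induction n using Nat.strong_induction_on with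
  | _ n ih =>
  intro s co hbound hmem hex
  classical
  set t := s.filter (fun i => co i ≠ 0) with ht
  have hsum : ∑ i ∈ t, co i • Ff ρ i = ∑ i ∈ s, co i • Ff ρ i := by
    refine Finset.sum_filter_of_ne ?_
    intro i _ hne h0
    exact hne (by rw [h0, zero_smul])
  have hmem' : ∑ i ∈ t, co i • Ff ρ i ∈ W := by rw [hsum]; exact hmem
  have hco_t : ∀ i ∈ t, co i ≠ 0 := fun i hi => (Finset.mem_filter.mp hi).2
  have hboundt : ∀ i ∈ t, wt i ≤ p ∧ lvl i ≤ n := fun i hi =>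
    hbound i (Finset.mem_filter.mp hi).1
  have hex' : ∃ i ∈ t, co i ≠ 0 := by
    obtain ⟨i, his, hco⟩ := hex
    exact ⟨i, Finset.mem_filter.mpr ⟨his, hco⟩, hco⟩
  obtain ⟨i₀, hi₀t, hc₀⟩ := hex'
  by_cases hcase1 : ∃ i ∈ t, 1 ≤ i.1
  · -- case A : use P to lower the G-degree
    obtain ⟨i₁, hi₁t, hk₁⟩ := hcase1
    have hn1 : 1 ≤ n := by
      have h := (hboundt i₁ hi₁t).2
      obtain ⟨k,r,e,c⟩ := i₁
      cases e <;> simp only [lvl_t, lvl_f] at h <;> simp at hk₁ <;> omega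
    set t1 := t.filter (fun i => 1 ≤ i.1) with ht1
    have hPw : ρ.P (∑ i ∈ t, co i • Ff ρ i)
        = ∑ i ∈ t1, (co i * ((i.1:ℂ) * m)) • Ff ρ (i.1 - 1, i.2) := by
      rw [map_sum, Finset.sum_congr rfl (fun i (_ : i ∈ t) => by
        rw [map_smul, F_P' ρ hm, smul_smul])]
      refine (Finset.sum_filter_of_ne ?_).symm
      intro i _ hne
      by_contra hk
      have hzero : i.1 = 0 := by omega
      exact hne (by rw [hzero]; simp)
    have hinj : ∀ a ∈ t1, ∀ b ∈ t1, (a.1 - 1, a.2) = (b.1 - 1, b.2) → a = b := by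
      intro a ha b hb hab
      have h1 : 1 ≤ a.1 := (Finset.mem_filter.mp ha).2
      have h2 : 1 ≤ b.1 := (Finset.mem_filter.mp hb).2
      rw [Prod.ext_iff] at hab ⊢
      simp only at hab
      exact ⟨by omega, hab.2⟩
    set co2 : ι → ℂ := fun j => co (j.1 + 1, j.2) * (((j.1 + 1 : ℕ):ℂ) * m) with hco2
    have himg : ∑ i ∈ t1, (co i * ((i.1:ℂ) * m)) • Ff ρ (i.1 - 1, i.2)
        = ∑ j ∈ t1.image (fun i : ι => (i.1 - 1, i.2)), co2 j • Ff ρ j := by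
      rw [Finset.sum_image hinj]
      refine Finset.sum_congr rfl ?_
      intro i hi
      have h1 : 1 ≤ i.1 := (Finset.mem_filter.mp hi).2
      have h2 : i.1 - 1 + 1 = i.1 := by omega
      simp only [hco2, h2]
    refine ih (n-1) (by omega) (t1.image (fun i : ι => (i.1 - 1, i.2))) co2 ?_ ?_ ?_
    · intro j hj
      obtain ⟨i, hi, rfl⟩ := Finset.mem_image.mp hj
      have hb := hboundt i (Finset.mem_filter.mp hi).1
      have h1 : 1 ≤ i.1 := (Finset.mem_filter.mp hi).2
      obtain ⟨k,r,e,c⟩ := i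
      constructor
      · exact hb.1
      · cases e <;> simp only [lvl_t, lvl_f] at hb ⊢ <;> simp at h1 <;> omega
    · rw [← himg, ← hPw]
      exact (hW _ hmem').2.1
    · refine ⟨(i₁.1 - 1, i₁.2), Finset.mem_image_of_mem _ (Finset.mem_filter.mpr ⟨hi₁t, hk₁⟩), ?_⟩
      have h2 : i₁.1 - 1 + 1 = i₁.1 := by omega
      simp only [hco2, h2]
      exact mul_ne_zero (hco_t i₁ hi₁t)
        (mul_ne_zero (Nat.cast_ne_zero.mpr (by omega)) hm)
  · -- all indices with nonzero coefficient have k = 0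
    have hk0 : ∀ i ∈ t, i.1 = 0 := by
      intro i hi
      by_contra hne
      exact hcase1 ⟨i, hi, by omega⟩
    by_cases hcase2 : ∃ i ∈ t, 1 ≤ lvl i
    · -- case B : use Q to lower the level
      obtain ⟨i₁, hi₁t, hl₁⟩ := hcase2
      have hn1 : 1 ≤ n := le_trans hl₁ (hboundt i₁ hi₁t).2
      have hQterm : ∀ i ∈ t, ρ.Q (co i • Ff ρ i) =
          (if i.2.2.1 then (co i * ((d + 1/2) - (i.2.1:ℂ))) • Ff ρ (0, i.2.1, false, i.2.2.2)
           else (co i * (-((i.2.1:ℂ)*(2*m)))) • Ff ρ (0, i.2.1 - 1, true, i.2.2.2)) := by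
        intro i hi
        have hk := hk0 i hi
        obtain ⟨k, r, e, c⟩ := i
        simp only at hk
        subst hk
        cases e
        · rw [map_smul, F_Q0f ρ hm, smul_smul]
          exact (if_neg (by simp)).symm
        · rw [map_smul, F_Q0t ρ hm, smul_smul]
          exact (if_pos rfl).symm
      set te := t.filter (fun i => i.2.2.1 = true) with hte
      set tf0 := t.filter (fun i => ¬(i.2.2.1 = true)) with htf0
      set tf := tf0.filter (fun i => 1 ≤ i.2.1) with htf
      have hQw : ρ.Q (∑ i ∈ t, co i • Ff ρ i)
          = (∑ i ∈ te, (co i * ((d + 1/2) - (i.2.1:ℂ))) • Ff ρ (0, i.2.1, false, i.2.2.2))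
            + ∑ i ∈ tf, (co i * (-((i.2.1:ℂ)*(2*m)))) • Ff ρ (0, i.2.1 - 1, true, i.2.2.2) := by
        rw [map_sum, Finset.sum_congr rfl hQterm, Finset.sum_ite]
        congr 1
        refine (Finset.sum_filter_of_ne ?_).symm
        intro i _ hne
        by_contra hr
        have hzero : i.2.1 = 0 := by omega
        exact hne (by rw [hzero]; simp)
      set ge : ι → ι := fun i => ((0:ℕ), i.2.1, false, i.2.2.2) with hge
      set gf : ι → ι := fun i => ((0:ℕ), i.2.1 - 1, true, i.2.2.2) with hgf
      set co2 : ι → ℂ := fun j =>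
        if j.2.2.1 then co (0, j.2.1 + 1, false, j.2.2.2) * (-(((j.2.1 + 1 : ℕ):ℂ))*(2*m))
        else co (0, j.2.1, true, j.2.2.2) * ((d + 1/2) - (j.2.1:ℂ)) with hco2
      have heta_t : ∀ i ∈ te, ((0:ℕ), i.2.1, true, i.2.2.2) = i := by
        intro i hi
        have hk := hk0 i (Finset.mem_filter.mp hi).1
        have he : i.2.2.1 = true := (Finset.mem_filter.mp hi).2
        obtain ⟨k,r,e,c⟩ := i
        simp only at hk he
        subst hk; subst he; rfl
      have heta_f : ∀ i ∈ tf, ((0:ℕ), i.2.1, false, i.2.2.2) = i := by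
        intro i hi
        have hi0 := (Finset.mem_filter.mp hi).1
        have hk := hk0 i (Finset.mem_filter.mp hi0).1
        have he := (Finset.mem_filter.mp hi0).2
        rw [Bool.not_eq_true] at he
        obtain ⟨k,r,e,c⟩ := i
        simp only at hk he
        subst hk; subst he; rfl
      have hinj_e : ∀ a ∈ te, ∀ b ∈ te, ge a = ge b → a = b := by
        intro a ha b hb hab
        have h2 := congrArg (fun j : ι => j.2.1) hab
        have h3 := congrArg (fun j : ι => j.2.2.2) hab
        have h2' : a.2.1 = b.2.1 := h2
        have h3' : a.2.2.2 = b.2.2.2 := h3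
        rw [← heta_t a ha, ← heta_t b hb, h2', h3']
      have hinj_f : ∀ a ∈ tf, ∀ b ∈ tf, gf a = gf b → a = b := by
        intro a ha b hb hab
        have ha1 : 1 ≤ a.2.1 := (Finset.mem_filter.mp ha).2
        have hb1 : 1 ≤ b.2.1 := (Finset.mem_filter.mp hb).2
        have h2 := congrArg (fun j : ι => j.2.1) hab
        have h3 := congrArg (fun j : ι => j.2.2.2) hab
        have h2a : a.2.1 - 1 = b.2.1 - 1 := h2
        have h2' : a.2.1 = b.2.1 := by omega
        have h3' : a.2.2.2 = b.2.2.2 := h3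
        rw [← heta_f a ha, ← heta_f b hb, h2', h3']
      have hsum_e : ∑ i ∈ te, (co i * ((d + 1/2) - (i.2.1:ℂ))) • Ff ρ (0, i.2.1, false, i.2.2.2)
          = ∑ j ∈ te.image ge, co2 j • Ff ρ j := by
        rw [Finset.sum_image hinj_e]
        refine Finset.sum_congr rfl ?_
        intro i hi
        rw [show co2 (ge i) = co ((0:ℕ), i.2.1, true, i.2.2.2) * ((d + 1/2) - (i.2.1:ℂ)) from by
          simp only [hco2, hge]; exact if_neg (by simp)]
        rw [heta_t i hi]
      have hsum_f : ∑ i ∈ tf, (co i * (-((i.2.1:ℂ)*(2*m)))) • Ff ρ (0, i.2.1 - 1, true, i.2.2.2)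
          = ∑ j ∈ tf.image gf, co2 j • Ff ρ j := by
        rw [Finset.sum_image hinj_f]
        refine Finset.sum_congr rfl ?_
        intro i hi
        have h1 : 1 ≤ i.2.1 := (Finset.mem_filter.mp hi).2
        have h2 : i.2.1 - 1 + 1 = i.2.1 := by omega
        rw [show co2 (gf i) = co ((0:ℕ), i.2.1 - 1 + 1, false, i.2.2.2)
            * (-(((i.2.1 - 1 + 1 : ℕ):ℂ))*(2*m)) from by
          simp only [hco2, hgf]; exact if_pos trivial]
        rw [h2, heta_f i hi]
        congr 1
        ring
      have hdisj : Disjoint (te.image ge) (tf.image gf) := by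
        rw [Finset.disjoint_left]
        intro j hj1 hj2
        obtain ⟨a, _, rfl⟩ := Finset.mem_image.mp hj1
        obtain ⟨b, _, hb⟩ := Finset.mem_image.mp hj2
        simp only [hge, hgf, Prod.ext_iff] at hb
        exact Bool.false_ne_true (hb.2.2.1.symm ▸ rfl)
      have hQw2 : ρ.Q (∑ i ∈ t, co i • Ff ρ i)
          = ∑ j ∈ te.image ge ∪ tf.image gf, co2 j • Ff ρ j := by
        rw [hQw, hsum_e, hsum_f, Finset.sum_union hdisj]
      refine ih (n-1) (by omega) (te.image ge ∪ tf.image gf) co2 ?_ ?_ ?_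
      · intro j hj
        rcases Finset.mem_union.mp hj with hj | hj
        · obtain ⟨i, hi, rfl⟩ := Finset.mem_image.mp hj
          have hit := (Finset.mem_filter.mp hi).1
          have hb := hboundt i hit
          have he : i.2.2.1 = true := (Finset.mem_filter.mp hi).2
          have hk := hk0 i hit
          obtain ⟨k,r,e,c⟩ := i
          simp only at hk he
          subst hk; subst he
          simp only [hge, wt_t, wt_f, lvl_t, lvl_f] at hb ⊢
          omega
        · obtain ⟨i, hi, rfl⟩ := Finset.mem_image.mp hj
          have hi0 := (Finset.mem_filter.mp hi).1
          have hr1 : 1 ≤ i.2.1 := (Finset.mem_filter.mp hi).2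
          have hit := (Finset.mem_filter.mp hi0).1
          have hb := hboundt i hit
          have he := (Finset.mem_filter.mp hi0).2
          rw [Bool.not_eq_true] at he
          have hk := hk0 i hit
          obtain ⟨k,r,e,c⟩ := i
          simp only at hk he hr1
          subst hk; subst he
          simp only [hgf, wt_t, wt_f, lvl_t, lvl_f] at hb ⊢
          omega
      · rw [← hQw2]
        exact (hW _ hmem').2.2.2.2.2.2.1
      · -- a nonzero coefficient survives
        have hk := hk0 i₁ hi₁t
        obtain ⟨k,r,e,c⟩ := i₁
        simp only at hk
        subst hk
        cases e
        · -- e = false : level ≥ 1 forces r ≥ 1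
          have hr1 : 1 ≤ r := by
            simp only [lvl_f] at hl₁
            omega
          have himem : ((0:ℕ),r,false,c) ∈ tf := by
            refine Finset.mem_filter.mpr ⟨Finset.mem_filter.mpr ⟨hi₁t, ?_⟩, hr1⟩
            simp
          refine ⟨gf ((0:ℕ),r,false,c), Finset.mem_union_right _ (Finset.mem_image_of_mem _ himem), ?_⟩
          have h2 : r - 1 + 1 = r := by omega
          rw [show co2 (gf ((0:ℕ),r,false,c)) = co ((0:ℕ), r - 1 + 1, false, c)
              * (-(((r - 1 + 1 : ℕ):ℂ))*(2*m)) from by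
            simp only [hco2, hgf]; exact if_pos trivial]
          rw [h2]
          refine mul_ne_zero (hco_t _ hi₁t) ?_
          simp only [neg_mul, ne_eq, neg_eq_zero]
          refine mul_ne_zero (Nat.cast_ne_zero.mpr (by omega)) (by
            exact mul_ne_zero two_ne_zero hm)
        · -- e = true : r < p since wt ≤ p
          have hrp : r < p := by
            have := (hboundt _ hi₁t).1
            simp only [wt_t] at this
            omega
          have himem : ((0:ℕ),r,true,c) ∈ te := by
            refine Finset.mem_filter.mpr ⟨hi₁t, rfl⟩
          refine ⟨ge ((0:ℕ),r,true,c), Finset.mem_union_left _ (Finset.mem_image_of_mem _ himem), ?_⟩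
          rw [show co2 (ge ((0:ℕ),r,true,c)) = co ((0:ℕ), r, true, c) * ((d + 1/2) - (r:ℂ)) from by
            simp only [hco2, hge]; exact if_neg (by simp)]
          refine mul_ne_zero (hco_t _ hi₁t) ?_
          rw [hd]
          rw [show (p:ℂ) - 1/2 + 1/2 - (r:ℂ) = (p:ℂ) - (r:ℂ) from by ring]
          rw [sub_ne_zero]
          exact_mod_cast Nat.ne_of_gt hrp
    · -- case C : everything is at level 0
      have hlvl0 : ∀ i ∈ t, lvl i = 0 := by
        intro i hi
        by_contra hne
        exact hcase2 ⟨i, hi, by omega⟩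
      have hmempair : ∀ i ∈ t, i = ((0:ℕ),(0:ℕ),false,false) ∨ i = ((0:ℕ),(0:ℕ),false,true) := by
        intro i hi
        have hk := hk0 i hi
        have hl := hlvl0 i hi
        obtain ⟨k,r,e,c⟩ := i
        simp only at hk
        subst hk
        cases e
        · simp only [lvl_f] at hl
          have : r = 0 := by omega
          subst this
          cases c
          · exact Or.inl rfl
          · exact Or.inr rfl
        · simp only [lvl_t] at hl
          omega
      set a : ι := ((0:ℕ),(0:ℕ),false,false) with ha
      set b : ι := ((0:ℕ),(0:ℕ),false,true) with hb
      have hab : a ≠ b := by simp [ha, hb]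
      have hsub : t ⊆ {a, b} := by
        intro i hi
        rcases hmempair i hi with h | h <;> simp [h, ha, hb]
      have hw2 : ∑ i ∈ t, co i • Ff ρ i
          = (if a ∈ t then co a else 0) • ρ.v0 + (if b ∈ t then co b else 0) • ρ.Chi ρ.v0 := by
        rw [show ∑ i ∈ t, co i • Ff ρ i = ∑ i ∈ t, (if i ∈ t then co i else 0) • Ff ρ i from
          Finset.sum_congr rfl (fun i hi => by rw [if_pos hi])]
        rw [Finset.sum_subset hsub (fun j _ hj => by rw [if_neg hj, zero_smul])]
        rw [Finset.sum_pair hab, Ff_000, Ff_001]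
      have hne2 : (if a ∈ t then co a else 0) ≠ 0 ∨ (if b ∈ t then co b else 0) ≠ 0 := by
        rcases hmempair i₀ hi₀t with h | h
        · left; subst h; rw [if_pos hi₀t]; exact hc₀
        · right; subst h; rw [if_pos hi₀t]; exact hc₀
      exact level0_case ρ hm W hW _ _ (by rw [← hw2]; exact hmem') hne2

end S7



/-- For `m ≠ 0` and `d = p - 1/2` (`p ∈ ℤ≥0`), the factor module
`V^d / I^d` by the submodule `I^d` generated by the singular vector
`v_s^p = (G² - 2mK)^p (G - 2χS) v₀` is irreducible; equivalently, the only invariant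
subspaces of `V^d` containing `I^d` are `I^d` and `V^d` itself. -/
theorem statement7 {d m : ℂ} {V : Type*} [AddCommGroup V] [Module ℂ V]
    (ρ : SSch1Verma d m V) (hm : m ≠ 0) (p : ℕ) (hd : d = (p : ℂ) - 1/2) :
    ∀ W : Submodule ℂ V, ρ.Invariant W →
      ρ.gen {(((ρ.G * ρ.G - (2 * m) • ρ.K) ^ p) (ρ.G ρ.v0 - (2 : ℂ) • ρ.Chi (ρ.S ρ.v0)))} ≤ W →
      W = ρ.gen {(((ρ.G * ρ.G - (2 * m) • ρ.K) ^ p) (ρ.G ρ.v0 - (2 : ℂ) • ρ.Chi (ρ.S ρ.v0)))} ∨ W = ⊤ := by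
  intro W hWinv hgenle
  have hII := S7.gen_eq_II ρ hm p hd
  by_cases hle : W ≤ ρ.gen {(((ρ.G * ρ.G - (2 * m) • ρ.K) ^ p) (ρ.G ρ.v0 - (2 : ℂ) • ρ.Chi (ρ.S ρ.v0)))}
  · exact Or.inl (le_antisymm hle hgenle)
  · right
    rw [SetLike.not_le_iff_exists] at hle
    obtain ⟨w, hwW, hwI⟩ := hle
    rw [hII] at hwI
    have hwtop : w ∈ Submodule.span ℂ (Set.range (S7.Ff ρ)) := by
      rw [S7.spanF_top ρ hm]; exact Submodule.mem_top
    rw [Finsupp.mem_span_range_iff_exists_finsupp] at hwtop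
    obtain ⟨x, hx⟩ := hwtop
    classical
    set sR := x.support.filter (fun i => S7.wt i ≤ p) with hsR
    set sI := x.support.filter (fun i => ¬ S7.wt i ≤ p) with hsI
    have hsplit : (∑ i ∈ sR, x i • S7.Ff ρ i) + (∑ i ∈ sI, x i • S7.Ff ρ i) = w := by
      rw [← hx, Finsupp.sum]
      exact Finset.sum_filter_add_sum_filter_not _ _ _
    have hImem : (∑ i ∈ sI, x i • S7.Ff ρ i) ∈ S7.II ρ p := by
      refine Submodule.sum_mem _ ?_
      intro i hi
      have h2 := (Finset.mem_filter.mp hi).2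
      exact Submodule.smul_mem _ _ (S7.mem_II_of ρ (by omega))
    have hgenle' : S7.II ρ p ≤ W := hII ▸ hgenle
    have hwR : (∑ i ∈ sR, x i • S7.Ff ρ i) ∈ W := by
      have h2 : (∑ i ∈ sR, x i • S7.Ff ρ i) = w - (∑ i ∈ sI, x i • S7.Ff ρ i) := by
        rw [← hsplit]; abel
      rw [h2]
      exact Submodule.sub_mem _ hwW (hgenle' hImem)
    have hex : ∃ i ∈ sR, x i ≠ 0 := by
      by_contra hnone
      push_neg at hnone
      have h0 : (∑ i ∈ sR, x i • S7.Ff ρ i) = 0 :=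
        Finset.sum_eq_zero (fun i hi => by rw [hnone i hi, zero_smul])
      refine hwI ?_
      rw [← hsplit, h0, zero_add]
      exact hImem
    have hv0 : ρ.v0 ∈ W :=
      S7.engine ρ hm p hd W hWinv (sR.sup S7.lvl) sR (fun i => x i)
        (fun i hi => ⟨(Finset.mem_filter.mp hi).2, Finset.le_sup hi⟩) hwR hex
    rw [eq_top_iff, ← S7.spanF_top ρ hm]
    refine Submodule.span_le.mpr ?_
    rintro y ⟨⟨k,r,e,c⟩, rfl⟩
    have hGw : ∀ v ∈ W, ρ.G v ∈ W := fun v hv => (hWinv v hv).2.2.1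
    have hKw : ∀ v ∈ W, ρ.K v ∈ W := fun v hv => (hWinv v hv).2.2.2.2.1
    have hSw : ∀ v ∈ W, ρ.S v ∈ W := fun v hv => (hWinv v hv).2.2.2.2.2.2.2.1
    have hXw : ∀ v ∈ W, ρ.X v ∈ W := fun v hv => (hWinv v hv).2.2.2.2.2.2.2.2.1
    have hCw : ∀ v ∈ W, ρ.Chi v ∈ W := fun v hv => (hWinv v hv).2.2.2.2.2.2.2.2.2
    have hAw : ∀ v ∈ W, S7.AA ρ v ∈ W := fun v hv => by
      rw [S7.vAA]
      exact Submodule.sub_mem _ (hGw _ (hGw _ hv)) (Submodule.smul_mem _ _ (hKw _ hv))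
    have hSpw : ∀ v ∈ W, S7.Sp ρ v ∈ W := fun v hv => by
      rw [S7.vSp]
      exact Submodule.sub_mem _ (hSw _ hv) (Submodule.smul_mem _ _ (hGw _ (hXw _ hv)))
    have h1 : ∀ c' : Bool, S7.Ff ρ (0,0,false,c') ∈ W := by
      intro c'; cases c'
      · rw [S7.Ff_000]; exact hv0
      · rw [S7.Ff_001]; exact hCw _ hv0
    have h2 : ∀ e' c', S7.Ff ρ (0,0,e',c') ∈ W := by
      intro e' c'; cases e'
      · exact h1 c'
      · rw [← S7.F_Sp0]; exact hSpw _ (h1 c')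
    have h3 : ∀ r' e' c', S7.Ff ρ (0,r',e',c') ∈ W := by
      intro r'
      induction r' with
      | zero => exact h2
      | succ r' ihr => intro e' c'; rw [← S7.F_A]; exact hAw _ (ihr e' c')
    have h4 : ∀ k' r' e' c', S7.Ff ρ (k',r',e',c') ∈ W := by
      intro k'
      induction k' with
      | zero => exact h3
      | succ k' ihk => intro r' e' c'; rw [← S7.F_G]; exact hGw _ (ihk r' e' c')
    exact h4 k r e c
end

section
/- Let m = 0 and d = p ∈ ℕ = {1,2,...}. Let I¹ ⊆ V^p be the submodule generated by G v₀, and let 𝓘^p ⊆ V^p / I¹ be the submodule generated by the singular vector K^p S w₀ (w₀ the image of v₀). Then the factor module (V^p / I¹)/𝓘^p is irreducible and has dimension 2p + 1, with basis {K^ℓ |0⟩, K^ℓ S |0⟩ (ℓ = 0, 1, ..., p−1), K^p |0⟩}, where |0⟩ is the image of the lowest weight vector. -/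
namespace SSch1Verma

variable {d m : ℂ} {V : Type*} [AddCommGroup V] [Module ℂ V]

section Actions

/-- basis vectors -/
def bv (ρ : SSch1Verma d m V) (k l : ℕ) (a c : Bool) : V :=
  (ρ.G ^ k * ρ.K ^ l * (if a then ρ.S else 1) * (if c then ρ.Chi else 1)) ρ.v0

lemma comm_apply {A B C : Module.End ℂ V} (h : A * B - B * A = C) (x : V) :
    A (B x) = B (A x) + C x := by
  have := LinearMap.congr_fun h x
  simp only [LinearMap.sub_apply, Module.End.mul_apply] at this
  rw [sub_eq_iff_eq_add] at this
  rw [this]; abel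

lemma comm0_apply {A B : Module.End ℂ V} (h : A * B = B * A) (x : V) :
    A (B x) = B (A x) := by
  have := LinearMap.congr_fun h x
  simpa only [Module.End.mul_apply] using this

lemma acomm_apply {A B C : Module.End ℂ V} (h : A * B + B * A = C) (x : V) :
    A (B x) = - B (A x) + C x := by
  have := LinearMap.congr_fun h x
  simp only [LinearMap.add_apply, Module.End.mul_apply] at this
  rw [neg_add_eq_sub, eq_sub_iff_add_eq]; exact this

lemma nege_apply {A B : Module.End ℂ V} (h : A * B = -(B * A)) (x : V) :
    A (B x) = - B (A x) := by
  have := LinearMap.congr_fun h x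
  simpa only [Module.End.mul_apply, LinearMap.neg_apply] using this

variable (ρ : SSch1Verma d m V)

lemma bv_zero (a c : Bool) :
    ρ.bv 0 0 a c = ((if a then ρ.S else 1) * (if c then ρ.Chi else 1)) ρ.v0 := by
  simp [bv]

lemma G_bv (k l : ℕ) (a c : Bool) : ρ.G (ρ.bv k l a c) = ρ.bv (k+1) l a c := by
  simp only [bv, ← Module.End.mul_apply, ← mul_assoc, ← pow_succ']

lemma K_G_pow (k : ℕ) : ρ.K * ρ.G ^ k = ρ.G ^ k * ρ.K := by
  induction k with
  | zero => simp
  | succ k ih =>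
    rw [pow_succ', ← mul_assoc, ← ρ.rel_GK, mul_assoc, ih, ← mul_assoc, ← pow_succ']

lemma K_bv (k l : ℕ) (a c : Bool) : ρ.K (ρ.bv k l a c) = ρ.bv k (l+1) a c := by
  simp only [bv, ← Module.End.mul_apply, ← mul_assoc]
  congr 2
  rw [K_G_pow, mul_assoc (ρ.G ^ k), ← pow_succ']

end Actions

end SSch1Verma
section Actions2

namespace SSch1Verma

variable {d : ℂ} {V : Type*} [AddCommGroup V] [Module ℂ V] (ρ : SSch1Verma d 0 V)

-- helpers for `ℕ`-subtraction bookkeeping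
lemma bv_pred_smul₁ (n l : ℕ) (a c : Bool) :
    (n:ℂ) • ρ.bv (n-1+1) l a c = (n:ℂ) • ρ.bv n l a c := by cases n <;> simp
lemma bv_pred_smul₂ (k n : ℕ) (a c : Bool) :
    (n:ℂ) • ρ.bv k (n-1+1) a c = (n:ℂ) • ρ.bv k n a c := by cases n <;> simp
lemma bv_pred_smul₂' (k n : ℕ) (z : ℂ) (a c : Bool) :
    ((n:ℂ) * z) • ρ.bv k (n-1+1) a c = ((n:ℂ) * z) • ρ.bv k n a c := by cases n <;> simp

-- vector-level commutation rules
lemma S_G (x : V) : ρ.S (ρ.G x) = ρ.G (ρ.S x) := comm0_apply ρ.rel_SG x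
lemma S_K (x : V) : ρ.S (ρ.K x) = ρ.K (ρ.S x) := comm0_apply ρ.rel_SK x
lemma S_Chi (x : V) : ρ.S (ρ.Chi x) = -ρ.Chi (ρ.S x) := by
  have h : ρ.S * ρ.Chi = -(ρ.Chi * ρ.S) := by
    rw [ρ.chi_S, neg_neg]
  exact nege_apply h x
lemma S_S (x : V) : ρ.S (ρ.S x) = -ρ.K x := by
  have h := LinearMap.congr_fun ρ.rel_SS x
  simp only [LinearMap.add_apply, Module.End.mul_apply, LinearMap.neg_apply,
    LinearMap.smul_apply] at h
  have h2 : (2:ℂ) • (ρ.S (ρ.S x)) = (2:ℂ) • (-ρ.K x) := by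
    rw [two_smul, smul_neg]; exact h
  exact smul_right_injective V two_ne_zero h2
lemma Chi_G (x : V) : ρ.Chi (ρ.G x) = ρ.G (ρ.Chi x) := comm0_apply ρ.chi_G x
lemma Chi_S (x : V) : ρ.Chi (ρ.S x) = -ρ.S (ρ.Chi x) := nege_apply ρ.chi_S x
lemma Chi_K (x : V) : ρ.Chi (ρ.K x) = ρ.K (ρ.Chi x) := comm0_apply ρ.chi_K x
lemma Chi_Chi (x : V) : ρ.Chi (ρ.Chi x) = 0 := by
  have h := LinearMap.congr_fun ρ.chi_sq x
  simpa using h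
lemma M_G (x : V) : ρ.M (ρ.G x) = ρ.G (ρ.M x) := comm0_apply ρ.rel_GM.symm x
lemma M_K (x : V) : ρ.M (ρ.K x) = ρ.K (ρ.M x) := comm0_apply ρ.rel_KM.symm x
lemma M_S (x : V) : ρ.M (ρ.S x) = ρ.S (ρ.M x) := comm0_apply ρ.rel_SM.symm x
lemma M_Chi (x : V) : ρ.M (ρ.Chi x) = ρ.Chi (ρ.M x) := comm0_apply ρ.chi_M.symm x
lemma X_G (x : V) : ρ.X (ρ.G x) = ρ.G (ρ.X x) := comm0_apply ρ.rel_XG x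
lemma X_K (x : V) : ρ.X (ρ.K x) = ρ.K (ρ.X x) := comm0_apply ρ.rel_XK x
lemma X_S (x : V) : ρ.X (ρ.S x) = -ρ.S (ρ.X x) - ρ.G x := by
  have := acomm_apply ρ.rel_SX x
  have h : ρ.X * ρ.S + ρ.S * ρ.X = -ρ.G := by rw [add_comm]; exact ρ.rel_SX
  have := acomm_apply h x
  simpa [sub_eq_add_neg] using this
lemma X_Chi (x : V) : ρ.X (ρ.Chi x) = -ρ.Chi (ρ.X x) := by
  have h : ρ.X * ρ.Chi = -(ρ.Chi * ρ.X) := by rw [ρ.chi_X, neg_neg]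
  exact nege_apply h x
lemma D_G (x : V) : ρ.D (ρ.G x) = ρ.G (ρ.D x) + ρ.G x := comm_apply ρ.rel_DG x
lemma D_K (x : V) : ρ.D (ρ.K x) = ρ.K (ρ.D x) + (2:ℂ) • ρ.K x := by
  have := comm_apply ρ.rel_DK x
  simpa using this
lemma D_S (x : V) : ρ.D (ρ.S x) = ρ.S (ρ.D x) + ρ.S x := comm_apply ρ.rel_DS x
lemma D_Chi (x : V) : ρ.D (ρ.Chi x) = ρ.Chi (ρ.D x) := comm0_apply ρ.chi_D.symm x
lemma P_G (x : V) : ρ.P (ρ.G x) = ρ.G (ρ.P x) + ρ.M x := comm_apply ρ.rel_PG x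
lemma P_K (x : V) : ρ.P (ρ.K x) = ρ.K (ρ.P x) + ρ.G x := comm_apply ρ.rel_PK x
lemma P_S (x : V) : ρ.P (ρ.S x) = ρ.S (ρ.P x) + ρ.X x := comm_apply ρ.rel_PS x
lemma P_Chi (x : V) : ρ.P (ρ.Chi x) = ρ.Chi (ρ.P x) := comm0_apply ρ.chi_P.symm x
lemma Q_G (x : V) : ρ.Q (ρ.G x) = ρ.G (ρ.Q x) + ρ.X x := comm_apply ρ.rel_QG x
lemma Q_K (x : V) : ρ.Q (ρ.K x) = ρ.K (ρ.Q x) + ρ.S x := comm_apply ρ.rel_QK x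
lemma Q_S (x : V) : ρ.Q (ρ.S x) = -ρ.S (ρ.Q x) - ρ.D x := by
  have := acomm_apply ρ.rel_QS x
  simpa [sub_eq_add_neg] using this
lemma Q_Chi (x : V) : ρ.Q (ρ.Chi x) = -ρ.Chi (ρ.Q x) := by
  have h : ρ.Q * ρ.Chi = -(ρ.Chi * ρ.Q) := by rw [ρ.chi_Q, neg_neg]
  exact nege_apply h x
lemma H_G (x : V) : ρ.H (ρ.G x) = ρ.G (ρ.H x) + ρ.P x := comm_apply ρ.rel_HG x
lemma H_K (x : V) : ρ.H (ρ.K x) = ρ.K (ρ.H x) + ρ.D x := comm_apply ρ.rel_HK x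
lemma H_S (x : V) : ρ.H (ρ.S x) = ρ.S (ρ.H x) + ρ.Q x := comm_apply ρ.rel_HS x
lemma H_Chi (x : V) : ρ.H (ρ.Chi x) = ρ.Chi (ρ.H x) := comm0_apply ρ.chi_H.symm x
lemma H_eq (x : V) : ρ.H x = -ρ.Q (ρ.Q x) := by
  have h := LinearMap.congr_fun ρ.rel_QQ x
  simp only [LinearMap.add_apply, Module.End.mul_apply, LinearMap.neg_apply,
    LinearMap.smul_apply] at h
  have h2 : (2:ℂ) • (ρ.Q (ρ.Q x)) = (2:ℂ) • (-ρ.H x) := by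
    rw [two_smul, smul_neg]; exact h
  have := smul_right_injective V two_ne_zero h2
  rw [this]; simp
lemma H_v0 : ρ.H ρ.v0 = 0 := by rw [H_eq, ρ.lw_Q]; simp

lemma bv00ff : ρ.bv 0 0 false false = ρ.v0 := by simp [bv]
lemma bv00ft : ρ.bv 0 0 false true = ρ.Chi ρ.v0 := by simp [bv]
lemma bv00tf : ρ.bv 0 0 true false = ρ.S ρ.v0 := by simp [bv]
lemma bv00tt : ρ.bv 0 0 true true = ρ.S (ρ.Chi ρ.v0) := by simp [bv, Module.End.mul_apply]

-- S action
lemma S_bv_f (k l : ℕ) (c : Bool) : ρ.S (ρ.bv k l false c) = ρ.bv k l true c := by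
  induction k with
  | zero =>
    induction l with
    | zero =>
      cases c
      · rw [bv00ff, bv00tf]
      · rw [bv00ft, bv00tt]
    | succ l ih => rw [← K_bv, S_K, ih, K_bv]
  | succ k ih => rw [← G_bv, S_G, ih, G_bv]

lemma S_bv_t (k l : ℕ) (c : Bool) : ρ.S (ρ.bv k l true c) = -ρ.bv k (l+1) false c := by
  rw [← S_bv_f, S_S, K_bv]

-- Chi action
lemma Chi_bv_ff (k l : ℕ) : ρ.Chi (ρ.bv k l false false) = ρ.bv k l false true := by
  induction k with
  | zero =>
    induction l with
    | zero => rw [bv00ff, bv00ft]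
    | succ l ih => rw [← K_bv, Chi_K, ih, K_bv]
  | succ k ih => rw [← G_bv, Chi_G, ih, G_bv]

lemma Chi_bv_ft (k l : ℕ) : ρ.Chi (ρ.bv k l false true) = 0 := by
  rw [← Chi_bv_ff, Chi_Chi]

lemma Chi_bv_tf (k l : ℕ) : ρ.Chi (ρ.bv k l true false) = -ρ.bv k l true true := by
  rw [← S_bv_f, Chi_S, Chi_bv_ff, S_bv_f]

lemma Chi_bv_tt (k l : ℕ) : ρ.Chi (ρ.bv k l true true) = 0 := by
  rw [← S_bv_f, Chi_S, Chi_bv_ft, map_zero, neg_zero]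

-- M action
lemma M_bv (k l : ℕ) (a c : Bool) : ρ.M (ρ.bv k l a c) = 0 := by
  induction k with
  | zero =>
    induction l with
    | zero =>
      have hM : ρ.M ρ.v0 = 0 := by rw [ρ.lw_M]; simp
      cases a <;> cases c <;>
        simp [bv00ff, bv00ft, bv00tf, bv00tt, M_S, M_Chi, hM]
    | succ l ihl => rw [← K_bv, M_K, ihl, map_zero]
  | succ k ih => rw [← G_bv, M_G, ih, map_zero]

end SSch1Verma

end Actions2
section Actions3

namespace SSch1Verma

variable {d : ℂ} {V : Type*} [AddCommGroup V] [Module ℂ V] (ρ : SSch1Verma d 0 V)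

-- X action
lemma X_bv_ff (k l : ℕ) : ρ.X (ρ.bv k l false false) = ρ.bv k l false true := by
  induction k with
  | zero =>
    induction l with
    | zero => rw [bv00ff, bv00ft, ρ.lw_X]
    | succ l ih => rw [← K_bv, X_K, ih, K_bv]
  | succ k ih => rw [← G_bv, X_G, ih, G_bv]

lemma X_bv_ft (k l : ℕ) : ρ.X (ρ.bv k l false true) = 0 := by
  rw [← Chi_bv_ff, X_Chi, X_bv_ff, Chi_bv_ft, neg_zero]

lemma X_bv_tf (k l : ℕ) :
    ρ.X (ρ.bv k l true false) = -ρ.bv k l true true - ρ.bv (k+1) l false false := by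
  rw [← S_bv_f, X_S, X_bv_ff, S_bv_f, G_bv]

lemma X_bv_tt (k l : ℕ) : ρ.X (ρ.bv k l true true) = -ρ.bv (k+1) l false true := by
  rw [← S_bv_f, X_S, X_bv_ft, map_zero, neg_zero, zero_sub, G_bv]

-- D action
lemma D_bv (k l : ℕ) (a c : Bool) :
    ρ.D (ρ.bv k l a c) = ((k:ℂ) + 2*l + (if a then 1 else 0) - d) • ρ.bv k l a c := by
  induction k with
  | zero =>
    induction l with
    | zero =>
      cases a <;> cases c <;>
        simp [bv00ff, bv00ft, bv00tf, bv00tt, D_Chi, D_S, ρ.lw_D] <;>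
        module
    | succ l ih =>
      rw [← K_bv, D_K, ih, map_smul, K_bv]
      push_cast
      module
  | succ k ih =>
    rw [← G_bv, D_G, ih, map_smul, G_bv]
    push_cast
    module

-- P action
lemma P_bv_f (k l : ℕ) (c : Bool) :
    ρ.P (ρ.bv k l false c) = (l:ℂ) • ρ.bv (k+1) (l-1) false c := by
  induction l with
  | zero =>
    induction k with
    | zero =>
      cases c <;>
        simp only [bv00ff, bv00ft, P_Chi, ρ.lw_P, map_zero, Nat.cast_zero, zero_smul]
    | succ k ih =>
      rw [← G_bv, P_G, ih, M_bv, map_smul, G_bv, add_zero]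
      try simp
  | succ l ih =>
    rw [← K_bv, P_K, ih, map_smul, K_bv, G_bv, bv_pred_smul₂]
    simp only [Nat.add_sub_cancel]
    push_cast
    module

lemma P_bv_tf (k l : ℕ) :
    ρ.P (ρ.bv k l true false) = (l:ℂ) • ρ.bv (k+1) (l-1) true false + ρ.bv k l false true := by
  rw [← S_bv_f, P_S, P_bv_f, map_smul, S_bv_f, X_bv_ff]

lemma P_bv_tt (k l : ℕ) :
    ρ.P (ρ.bv k l true true) = (l:ℂ) • ρ.bv (k+1) (l-1) true true := by
  rw [← S_bv_f, P_S, P_bv_f, map_smul, S_bv_f, X_bv_ft, add_zero]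

-- Q action
lemma Q_bv_ff (k l : ℕ) :
    ρ.Q (ρ.bv k l false false)
      = (k:ℂ) • ρ.bv (k-1) l false true + (l:ℂ) • ρ.bv k (l-1) true false := by
  induction l with
  | zero =>
    induction k with
    | zero => simp [bv00ff, ρ.lw_Q]
    | succ k ih =>
      rw [← G_bv, Q_G, ih, X_bv_ff, map_add, map_smul, map_smul, G_bv, G_bv,
        bv_pred_smul₁]
      simp only [Nat.add_sub_cancel, Nat.cast_zero, zero_smul, add_zero]
      push_cast
      module
  | succ l ih =>
    rw [← K_bv, Q_K, ih, S_bv_f, map_add, map_smul, map_smul, K_bv, K_bv, bv_pred_smul₂]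
    simp only [Nat.add_sub_cancel]
    push_cast
    module

lemma Q_bv_ft (k l : ℕ) :
    ρ.Q (ρ.bv k l false true) = (l:ℂ) • ρ.bv k (l-1) true true := by
  induction l with
  | zero =>
    induction k with
    | zero =>
      rw [bv00ft, Q_Chi, ρ.lw_Q, map_zero, neg_zero, Nat.cast_zero, zero_smul]
    | succ k ih =>
      rw [← G_bv, Q_G, ih, X_bv_ft]
      simp
  | succ l ih =>
    rw [← K_bv, Q_K, ih, S_bv_f, map_smul, K_bv, bv_pred_smul₂]
    simp only [Nat.add_sub_cancel]
    push_cast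
    module

lemma Q_bv_tf (k l : ℕ) :
    ρ.Q (ρ.bv k l true false)
      = -((k:ℂ) • ρ.bv (k-1) l true true) + (d - l - k) • ρ.bv k l false false := by
  rw [← S_bv_f, Q_S, Q_bv_ff, D_bv]
  rw [map_add, map_smul, map_smul, S_bv_f, S_bv_t, smul_neg]
  rw [bv_pred_smul₂ ρ k l false false]
  simp only [Bool.false_eq_true, if_false]
  module

lemma Q_bv_tt (k l : ℕ) :
    ρ.Q (ρ.bv k l true true) = (d - l - k) • ρ.bv k l false true := by
  rw [← S_bv_f, Q_S, Q_bv_ft, D_bv, map_smul, S_bv_t, smul_neg]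
  rw [bv_pred_smul₂ ρ k l false true]
  simp only [Bool.false_eq_true, if_false]
  module

-- H action
lemma H_bv_f0 (k : ℕ) (c : Bool) : ρ.H (ρ.bv k 0 false c) = 0 := by
  induction k with
  | zero =>
    cases c <;>
      simp only [bv00ff, bv00ft, H_Chi, H_v0, map_zero]
  | succ k ih =>
    rw [← G_bv, H_G, ih, map_zero, zero_add, P_bv_f]
    simp

lemma H_bv_f (k l : ℕ) (c : Bool) :
    ρ.H (ρ.bv k l false c) = ((l:ℂ) * ((k:ℂ) + l - 1 - d)) • ρ.bv k (l-1) false c := by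
  induction l with
  | zero => rw [H_bv_f0]; simp
  | succ l ih =>
    rw [← K_bv, H_K, ih, D_bv, map_smul, K_bv, bv_pred_smul₂']
    simp only [Nat.add_sub_cancel, Bool.false_eq_true, if_false]
    push_cast
    module

lemma H_bv_tf (k l : ℕ) :
    ρ.H (ρ.bv k l true false)
      = ((l:ℂ) * ((k:ℂ) + l - d)) • ρ.bv k (l-1) true false
        + (k:ℂ) • ρ.bv (k-1) l false true := by
  rw [← S_bv_f, H_S, H_bv_f, Q_bv_ff, map_smul, S_bv_f]
  module

lemma H_bv_tt (k l : ℕ) :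
    ρ.H (ρ.bv k l true true) = ((l:ℂ) * ((k:ℂ) + l - d)) • ρ.bv k (l-1) true true := by
  rw [← S_bv_f, H_S, H_bv_f, Q_bv_ft, map_smul, S_bv_f]
  module

end SSch1Verma

end Actions3
section Invariance

namespace SSch1Verma

variable {V : Type*} [AddCommGroup V] [Module ℂ V]

/-- index set -/
abbrev Idx := ℕ × ℕ × Bool × Bool

/-- good (surviving) indices -/
def IsGood (p : ℕ) (i : Idx) : Prop :=
  i.1 = 0 ∧ i.2.2.2 = false ∧ i.2.1 + (if i.2.2.1 then 1 else 0) ≤ p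

lemma isGood_f (p k l : ℕ) (c : Bool) :
    IsGood p (k, l, false, c) ↔ (k = 0 ∧ c = false ∧ l ≤ p) := by simp [IsGood]

lemma isGood_t (p k l : ℕ) (c : Bool) :
    IsGood p (k, l, true, c) ↔ (k = 0 ∧ c = false ∧ l + 1 ≤ p) := by simp [IsGood]

instance (p : ℕ) (i : Idx) : Decidable (IsGood p i) := by unfold IsGood; infer_instance

variable {d : ℂ} (ρ : SSch1Verma d 0 V)

/-- the PBW basis as a function -/
def bfun : Idx → V := fun i => ρ.bv i.1 i.2.1 i.2.2.1 i.2.2.2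

lemma bfun_eq : ρ.bfun = fun i : Idx =>
    (ρ.G ^ i.1 * ρ.K ^ i.2.1 * (if i.2.2.1 then ρ.S else 1) *
      (if i.2.2.2 then ρ.Chi else 1)) ρ.v0 := rfl

/-- the invariant subspace spanned by the non-surviving basis vectors -/
def W0 (p : ℕ) : Submodule ℂ V :=
  Submodule.span ℂ (ρ.bfun '' {i | ¬ IsGood p i})

lemma bv_mem_W0_f {p : ℕ} (k l : ℕ) (c : Bool) (h : ¬ (k = 0 ∧ c = false ∧ l ≤ p)) :
    ρ.bv k l false c ∈ ρ.W0 p :=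
  Submodule.subset_span ⟨(k, l, false, c), by simp [isGood_f, h], rfl⟩

lemma bv_mem_W0_t {p : ℕ} (k l : ℕ) (c : Bool) (h : ¬ (k = 0 ∧ c = false ∧ l + 1 ≤ p)) :
    ρ.bv k l true c ∈ ρ.W0 p :=
  Submodule.subset_span ⟨(k, l, true, c), by simp [isGood_t]; intro hk hc; by_contra hh; exact h ⟨hk, hc, by omega⟩, rfl⟩

lemma map_mem_W0 {p : ℕ} {T : Module.End ℂ V}
    (hT : ∀ i : Idx, ¬ IsGood p i → T (ρ.bfun i) ∈ ρ.W0 p)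
    {w : V} (hw : w ∈ ρ.W0 p) : T w ∈ ρ.W0 p := by
  induction hw using Submodule.span_induction with
  | mem x hx => obtain ⟨i, hi, rfl⟩ := hx; exact hT i hi
  | zero => rw [map_zero]; exact zero_mem _
  | add x y _ _ hx hy => rw [map_add]; exact add_mem hx hy
  | smul a x _ hx => rw [map_smul]; exact Submodule.smul_mem _ a hx

end SSch1Verma

end Invariance
section W0Inv

namespace SSch1Verma

variable {V : Type*} [AddCommGroup V] [Module ℂ V] (p : ℕ) (ρ : SSch1Verma (p : ℂ) 0 V)

lemma coeff_zero₁ {l : ℕ} (hl : l = p + 1) : (l : ℂ) * ((0:ℕ) + (l:ℂ) - 1 - (p:ℂ)) = 0 := by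
  subst hl; push_cast; ring

lemma coeff_zero₂ {l : ℕ} (hl : l = p) : (l : ℂ) * ((0:ℕ) + (l:ℂ) - (p:ℂ)) = 0 := by
  subst hl; push_cast; ring

lemma W0_invariant : ρ.Invariant (ρ.W0 p) := by
  intro w hw
  refine ⟨?_, ?_, ?_, ?_, ?_, ?_, ?_, ?_, ?_, ?_⟩
  -- H
  · refine map_mem_W0 ρ ?_ hw
    rintro ⟨k, l, a, c⟩ hbad
    show ρ.H (ρ.bv k l a c) ∈ ρ.W0 p
    cases a <;> cases c
    · -- (false, false)
      rw [H_bv_f]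
      rw [isGood_f] at hbad
      by_cases hk : k = 0
      · subst hk
        by_cases hl : l = p + 1
        · rw [coeff_zero₁ p hl, zero_smul]; exact zero_mem _
        · exact Submodule.smul_mem _ _ (ρ.bv_mem_W0_f _ _ _ (by simp at hbad ⊢; omega))
      · exact Submodule.smul_mem _ _ (ρ.bv_mem_W0_f _ _ _ (by simp [hk]))
    · -- (false, true)
      rw [H_bv_f]
      exact Submodule.smul_mem _ _ (ρ.bv_mem_W0_f _ _ _ (by simp))
    · -- (true, false)
      rw [H_bv_tf]
      rw [isGood_t] at hbad
      refine add_mem ?_ (Submodule.smul_mem _ _ (ρ.bv_mem_W0_f _ _ _ (by simp)))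
      by_cases hk : k = 0
      · subst hk
        by_cases hl : l = p
        · rw [coeff_zero₂ p hl, zero_smul]; exact zero_mem _
        · exact Submodule.smul_mem _ _ (ρ.bv_mem_W0_t _ _ _ (by simp at hbad ⊢; omega))
      · exact Submodule.smul_mem _ _ (ρ.bv_mem_W0_t _ _ _ (by simp [hk]))
    · -- (true, true)
      rw [H_bv_tt]
      exact Submodule.smul_mem _ _ (ρ.bv_mem_W0_t _ _ _ (by simp))
  -- P
  · refine map_mem_W0 ρ ?_ hw
    rintro ⟨k, l, a, c⟩ hbad
    show ρ.P (ρ.bv k l a c) ∈ ρ.W0 p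
    cases a <;> cases c
    · rw [P_bv_f]; exact Submodule.smul_mem _ _ (ρ.bv_mem_W0_f _ _ _ (by simp))
    · rw [P_bv_f]; exact Submodule.smul_mem _ _ (ρ.bv_mem_W0_f _ _ _ (by simp))
    · rw [P_bv_tf]
      exact add_mem (Submodule.smul_mem _ _ (ρ.bv_mem_W0_t _ _ _ (by simp)))
        (ρ.bv_mem_W0_f _ _ _ (by simp))
    · rw [P_bv_tt]; exact Submodule.smul_mem _ _ (ρ.bv_mem_W0_t _ _ _ (by simp))
  -- G
  · refine map_mem_W0 ρ ?_ hw
    rintro ⟨k, l, a, c⟩ hbad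
    show ρ.G (ρ.bv k l a c) ∈ ρ.W0 p
    rw [G_bv]
    cases a
    · exact ρ.bv_mem_W0_f _ _ _ (by simp)
    · exact ρ.bv_mem_W0_t _ _ _ (by simp)
  -- D
  · refine map_mem_W0 ρ ?_ hw
    rintro ⟨k, l, a, c⟩ hbad
    show ρ.D (ρ.bv k l a c) ∈ ρ.W0 p
    rw [D_bv]
    refine Submodule.smul_mem _ _ (Submodule.subset_span ⟨(k,l,a,c), hbad, rfl⟩)
  -- K
  · refine map_mem_W0 ρ ?_ hw
    rintro ⟨k, l, a, c⟩ hbad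
    show ρ.K (ρ.bv k l a c) ∈ ρ.W0 p
    rw [K_bv]
    cases a <;> cases c
    · rw [isGood_f] at hbad
      exact ρ.bv_mem_W0_f _ _ _ (by simp at hbad ⊢; omega)
    · exact ρ.bv_mem_W0_f _ _ _ (by simp)
    · rw [isGood_t] at hbad
      exact ρ.bv_mem_W0_t _ _ _ (by simp at hbad ⊢; omega)
    · exact ρ.bv_mem_W0_t _ _ _ (by simp)
  -- M
  · refine map_mem_W0 ρ ?_ hw
    rintro ⟨k, l, a, c⟩ hbad
    show ρ.M (ρ.bv k l a c) ∈ ρ.W0 p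
    rw [M_bv]; exact zero_mem _
  -- Q
  · refine map_mem_W0 ρ ?_ hw
    rintro ⟨k, l, a, c⟩ hbad
    show ρ.Q (ρ.bv k l a c) ∈ ρ.W0 p
    cases a <;> cases c
    · rw [Q_bv_ff]
      rw [isGood_f] at hbad
      refine add_mem (Submodule.smul_mem _ _ (ρ.bv_mem_W0_f _ _ _ (by simp))) ?_
      by_cases hk : k = 0
      · subst hk
        refine Submodule.smul_mem _ _ (ρ.bv_mem_W0_t _ _ _ (by simp at hbad ⊢; omega))
      · cases k with
        | zero => exact absurd rfl hk
        | succ k => exact Submodule.smul_mem _ _ (ρ.bv_mem_W0_t _ _ _ (by simp))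
    · rw [Q_bv_ft]
      exact Submodule.smul_mem _ _ (ρ.bv_mem_W0_t _ _ _ (by simp))
    · rw [Q_bv_tf]
      rw [isGood_t] at hbad
      refine add_mem (neg_mem (Submodule.smul_mem _ _ (ρ.bv_mem_W0_t _ _ _ (by simp)))) ?_
      by_cases hk : k = 0
      · subst hk
        by_cases hl : l = p
        · have : ((p:ℂ) - (l:ℂ) - ((0:ℕ):ℂ)) = 0 := by subst hl; push_cast; ring
          rw [this, zero_smul]; exact zero_mem _
        · refine Submodule.smul_mem _ _ (ρ.bv_mem_W0_f _ _ _ (by simp at hbad ⊢; omega))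
      · exact Submodule.smul_mem _ _ (ρ.bv_mem_W0_f _ _ _ (by simp [hk]))
    · rw [Q_bv_tt]
      exact Submodule.smul_mem _ _ (ρ.bv_mem_W0_f _ _ _ (by simp))
  -- S
  · refine map_mem_W0 ρ ?_ hw
    rintro ⟨k, l, a, c⟩ hbad
    show ρ.S (ρ.bv k l a c) ∈ ρ.W0 p
    cases a <;> cases c
    · rw [S_bv_f]
      rw [isGood_f] at hbad
      exact ρ.bv_mem_W0_t _ _ _ (by simp at hbad ⊢; omega)
    · rw [S_bv_f]
      exact ρ.bv_mem_W0_t _ _ _ (by simp)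
    · rw [S_bv_t]
      rw [isGood_t] at hbad
      exact neg_mem (ρ.bv_mem_W0_f _ _ _ (by simp at hbad ⊢; omega))
    · rw [S_bv_t]
      exact neg_mem (ρ.bv_mem_W0_f _ _ _ (by simp))
  -- X
  · refine map_mem_W0 ρ ?_ hw
    rintro ⟨k, l, a, c⟩ hbad
    show ρ.X (ρ.bv k l a c) ∈ ρ.W0 p
    cases a <;> cases c
    · rw [X_bv_ff]; exact ρ.bv_mem_W0_f _ _ _ (by simp)
    · rw [X_bv_ft]; exact zero_mem _
    · rw [X_bv_tf]
      exact sub_mem (neg_mem (ρ.bv_mem_W0_t _ _ _ (by simp))) (ρ.bv_mem_W0_f _ _ _ (by simp))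
    · rw [X_bv_tt]; exact neg_mem (ρ.bv_mem_W0_f _ _ _ (by simp))
  -- Chi
  · refine map_mem_W0 ρ ?_ hw
    rintro ⟨k, l, a, c⟩ hbad
    show ρ.Chi (ρ.bv k l a c) ∈ ρ.W0 p
    cases a <;> cases c
    · rw [Chi_bv_ff]; exact ρ.bv_mem_W0_f _ _ _ (by simp)
    · rw [Chi_bv_ft]; exact zero_mem _
    · rw [Chi_bv_tf]; exact neg_mem (ρ.bv_mem_W0_t _ _ _ (by simp))
    · rw [Chi_bv_tt]; exact zero_mem _

end SSch1Verma

end W0Inv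
section GenEq

namespace SSch1Verma

variable {V : Type*} [AddCommGroup V] [Module ℂ V]

section GenBasic

variable {d m : ℂ} (ρ : SSch1Verma d m V)

lemma gen_invariant (s : Set V) : ρ.Invariant (ρ.gen s) := by
  intro w hw
  rw [gen, Submodule.mem_sInf] at hw
  refine ⟨?_, ?_, ?_, ?_, ?_, ?_, ?_, ?_, ?_, ?_⟩ <;>
    · rw [gen, Submodule.mem_sInf]
      intro W hW
      have h := hW.1 w (hw W hW)
      tauto

lemma subset_gen (s : Set V) : s ⊆ ρ.gen s :=
  fun _ hx => Submodule.mem_sInf.2 (fun _ hW => hW.2 hx)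

lemma gen_le {s : Set V} {W : Submodule ℂ V} (hW : ρ.Invariant W) (hs : s ⊆ W) :
    ρ.gen s ≤ W := sInf_le ⟨hW, hs⟩

end GenBasic

section Steps

variable {d : ℂ} (ρ : SSch1Verma d 0 V) {W : Submodule ℂ V}

lemma step_G (hW : ρ.Invariant W) {k l a c} (h : ρ.bv k l a c ∈ W) : ρ.bv (k+1) l a c ∈ W := by
  have := (hW _ h).2.2.1; rwa [G_bv] at this

lemma step_K (hW : ρ.Invariant W) {k l a c} (h : ρ.bv k l a c ∈ W) : ρ.bv k (l+1) a c ∈ W := by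
  have := (hW _ h).2.2.2.2.1; rwa [K_bv] at this

lemma step_S_f (hW : ρ.Invariant W) {k l c} (h : ρ.bv k l false c ∈ W) : ρ.bv k l true c ∈ W := by
  have := (hW _ h).2.2.2.2.2.2.2.1; rwa [S_bv_f] at this

lemma step_S_t (hW : ρ.Invariant W) {k l c} (h : ρ.bv k l true c ∈ W) : ρ.bv k (l+1) false c ∈ W := by
  have := (hW _ h).2.2.2.2.2.2.2.1
  rw [S_bv_t] at this
  simpa using neg_mem this

lemma step_Chi_f (hW : ρ.Invariant W) {k l} (h : ρ.bv k l false false ∈ W) : ρ.bv k l false true ∈ W := by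
  have := (hW _ h).2.2.2.2.2.2.2.2.2; rwa [Chi_bv_ff] at this

lemma step_Chi_t (hW : ρ.Invariant W) {k l} (h : ρ.bv k l true false ∈ W) : ρ.bv k l true true ∈ W := by
  have := (hW _ h).2.2.2.2.2.2.2.2.2
  rw [Chi_bv_tf] at this
  simpa using neg_mem this

lemma step_Q (hW : ρ.Invariant W) {k l a c} (h : ρ.bv k l a c ∈ W) : ρ.Q (ρ.bv k l a c) ∈ W :=
  (hW _ h).2.2.2.2.2.2.1

lemma step_H (hW : ρ.Invariant W) {k l a c} (h : ρ.bv k l a c ∈ W) : ρ.H (ρ.bv k l a c) ∈ W :=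
  (hW _ h).1

/-- from `v₀` everything is reachable -/
lemma reach_top (hW : ρ.Invariant W) (h0 : ρ.v0 ∈ W) : W = ⊤ := by
  have hff : ∀ l, ρ.bv 0 l false false ∈ W := by
    intro l
    induction l with
    | zero => rwa [bv00ff]
    | succ l ih => exact step_K ρ hW ih
  have hall0 : ∀ l (a c : Bool), ρ.bv 0 l a c ∈ W := by
    intro l a c
    cases a <;> cases c
    · exact hff l
    · exact step_Chi_f ρ hW (hff l)
    · exact step_S_f ρ hW (hff l)
    · exact step_Chi_t ρ hW (step_S_f ρ hW (hff l))
  have hall : ∀ k l (a c : Bool), ρ.bv k l a c ∈ W := by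
    intro k
    induction k with
    | zero => exact hall0
    | succ k ih => exact fun l a c => step_G ρ hW (ih l a c)
  rw [eq_top_iff, ← ρ.pbw_span, Submodule.span_le]
  rintro x ⟨i, rfl⟩
  exact hall i.1 i.2.1 i.2.2.1 i.2.2.2

end Steps

section JeqW0

variable (p : ℕ) (ρ : SSch1Verma (p : ℂ) 0 V)

lemma gen_two_eq : ρ.gen {ρ.G ρ.v0, (ρ.K ^ p * ρ.S) ρ.v0} = ρ.W0 p := by
  have hG : ρ.G ρ.v0 = ρ.bv 1 0 false false := by simp [bv]
  have hKS : (ρ.K ^ p * ρ.S) ρ.v0 = ρ.bv 0 p true false := by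
    simp [bv, Module.End.mul_apply]
  apply le_antisymm
  · refine gen_le ρ (W0_invariant p ρ) ?_
    rintro x (rfl | rfl)
    · rw [hG]; exact ρ.bv_mem_W0_f _ _ _ (by simp)
    · rw [hKS]; exact ρ.bv_mem_W0_t _ _ _ (by simp)
  · set J := ρ.gen {ρ.G ρ.v0, (ρ.K ^ p * ρ.S) ρ.v0} with hJ
    have hJinv : ρ.Invariant J := gen_invariant ρ _
    have h1 : ρ.bv 1 0 false false ∈ J := by
      rw [← hG]; exact subset_gen ρ _ (by simp)
    have h2 : ρ.bv 0 p true false ∈ J := by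
      rw [← hKS]; exact subset_gen ρ _ (by simp)
    -- χ v₀ ∈ J
    have h3 : ρ.bv 0 0 false true ∈ J := by
      have := step_Q ρ hJinv h1
      rw [Q_bv_ff] at this
      simpa using this
    -- all c = true vectors with k = 0
    have h4 : ∀ l (a : Bool), ρ.bv 0 l a true ∈ J := by
      have hK : ∀ l, ρ.bv 0 l false true ∈ J := by
        intro l
        induction l with
        | zero => exact h3
        | succ l ih => exact step_K ρ hJinv ih
      intro l a
      cases a
      · exact hK l
      · exact step_S_f ρ hJinv (hK l)
    -- k = 0, a = true, l ≥ p
    have h5 : ∀ j, ρ.bv 0 (p + j) true false ∈ J := by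
      intro j
      induction j with
      | zero => exact h2
      | succ j ih => exact step_K ρ hJinv ih
    -- k = 0, a = false, l ≥ p + 1
    have h6 : ∀ j, ρ.bv 0 (p + j + 1) false false ∈ J := by
      intro j
      exact step_S_t ρ hJinv (h5 j)
    -- all k = 0 bad vectors
    have h7 : ∀ l (a c : Bool), ¬ IsGood p (0, l, a, c) → ρ.bv 0 l a c ∈ J := by
      rintro l a c hbad
      cases a <;> cases c
      · rw [isGood_f] at hbad
        simp at hbad
        obtain ⟨j, rfl⟩ : ∃ j, l = p + j + 1 := ⟨l - p - 1, by omega⟩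
        exact h6 j
      · exact h4 l false
      · rw [isGood_t] at hbad
        simp at hbad
        obtain ⟨j, rfl⟩ : ∃ j, l = p + j := ⟨l - p, by omega⟩
        exact h5 j
      · exact h4 l true
    -- all k ≥ 1 vectors
    have h8 : ∀ k l (a c : Bool), ρ.bv (k+1) l a c ∈ J := by
      have base : ∀ l (a c : Bool), ρ.bv 1 l a c ∈ J := by
        have hKl : ∀ l, ρ.bv 1 l false false ∈ J := by
          intro l
          induction l with
          | zero => exact h1
          | succ l ih => exact step_K ρ hJinv ih
        intro l a c
        cases a <;> cases c
        · exact hKl l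
        · exact step_Chi_f ρ hJinv (hKl l)
        · exact step_S_f ρ hJinv (hKl l)
        · exact step_Chi_t ρ hJinv (step_S_f ρ hJinv (hKl l))
      intro k
      induction k with
      | zero => exact base
      | succ k ih => exact fun l a c => step_G ρ hJinv (ih l a c)
    rw [W0, Submodule.span_le]
    rintro x ⟨⟨k, l, a, c⟩, hbad, rfl⟩
    show ρ.bv k l a c ∈ J
    cases k with
    | zero => exact h7 l a c hbad
    | succ k => exact h8 k l a c

end JeqW0

end SSch1Verma

end GenEq
section Final

namespace SSch1Verma

variable {V : Type*} [AddCommGroup V] [Module ℂ V]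

lemma mem_of_smul_mem {W : Submodule ℂ V} {z : ℂ} (hz : z ≠ 0) {x : V}
    (h : z • x ∈ W) : x ∈ W := by
  have := W.smul_mem z⁻¹ h
  rwa [inv_smul_smul₀ hz] at this

variable (p : ℕ) (ρ : SSch1Verma (p : ℂ) 0 V)

/-- the `D`-weight as a natural number -/
def nu (i : Idx) : ℕ := i.1 + 2 * i.2.1 + (if i.2.2.1 then 1 else 0)

/-- the `D`-eigenvalue -/
noncomputable def mu (i : Idx) : ℂ := ((nu i : ℕ) : ℂ) - p

lemma D_bfun (i : Idx) : ρ.D (ρ.bfun i) = mu p i • ρ.bfun i := by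
  obtain ⟨k, l, a, c⟩ := i
  rw [show ρ.bfun (k,l,a,c) = ρ.bv k l a c from rfl, D_bv]
  congr 1
  unfold mu nu
  cases a <;> simp <;> push_cast <;> ring

lemma mu_inj_good {i j : Idx} (hi : IsGood p i) (hj : IsGood p j)
    (h : mu p i = mu p j) : i = j := by
  obtain ⟨k, l, a, c⟩ := i
  obtain ⟨k', l', a', c'⟩ := j
  obtain ⟨hk, hc, -⟩ := hi
  obtain ⟨hk', hc', -⟩ := hj
  simp only at hk hc hk' hc'
  subst hk hc hk' hc'
  unfold mu at h
  have h3 : nu (0, l, a, false) = nu (0, l', a', false) := by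
    have : ((nu (0, l, a, false) : ℕ) : ℂ) = ((nu (0, l', a', false) : ℕ) : ℂ) :=
      sub_left_inj.1 h
    exact_mod_cast this
  unfold nu at h3
  cases a <;> cases a' <;> simp at h3
  · have : l = l' := by omega
    subst this; rfl
  · exact absurd h3 (by omega)
  · exact absurd h3 (by omega)
  · have : l = l' := by omega
    subst this; rfl

/-- extraction of basis components using distinct `D`-eigenvalues -/
lemma extract {W : Submodule ℂ V} (hW : ρ.Invariant W) :
    ∀ s : Finset Idx, (∀ i ∈ s, IsGood p i) → ∀ f : Idx → ℂ,
      (∑ i ∈ s, f i • ρ.bfun i) ∈ W → ∀ j ∈ s, f j ≠ 0 → ρ.bfun j ∈ W := by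
  intro s
  induction s using Finset.strongInduction with
  | _ s ih =>
    intro hs f hsum j hj hfj
    by_cases hone : ∀ j' ∈ s, j' = j
    · have hset : s = {j} := Finset.eq_singleton_iff_unique_mem.2 ⟨hj, hone⟩
      rw [hset, Finset.sum_singleton] at hsum
      exact mem_of_smul_mem hfj hsum
    · push_neg at hone
      obtain ⟨j', hj's, hj'ne⟩ := hone
      have hx' : (∑ i ∈ s, (f i * (mu p i - mu p j')) • ρ.bfun i) ∈ W := by
        have hD : ρ.D (∑ i ∈ s, f i • ρ.bfun i) ∈ W := (hW _ hsum).2.2.2.1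
        have heq : ρ.D (∑ i ∈ s, f i • ρ.bfun i) - mu p j' • (∑ i ∈ s, f i • ρ.bfun i)
            = ∑ i ∈ s, (f i * (mu p i - mu p j')) • ρ.bfun i := by
          rw [map_sum, Finset.smul_sum, ← Finset.sum_sub_distrib]
          refine Finset.sum_congr rfl fun i _ => ?_
          rw [map_smul, D_bfun]
          module
        rw [← heq]
        exact sub_mem hD (Submodule.smul_mem _ _ hsum)
      have hzero : (fun i => (f i * (mu p i - mu p j')) • ρ.bfun i) j' = 0 := by simp
      have hsum2 : (∑ i ∈ s.erase j', (f i * (mu p i - mu p j')) • ρ.bfun i)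
          = ∑ i ∈ s, (f i * (mu p i - mu p j')) • ρ.bfun i := Finset.sum_erase s hzero
      rw [← hsum2] at hx'
      have hne : f j * (mu p j - mu p j') ≠ 0 :=
        mul_ne_zero hfj (sub_ne_zero.2 fun h0 =>
          hj'ne (mu_inj_good p (hs j hj) (hs j' hj's) h0).symm)
      exact ih (s.erase j') (Finset.erase_ssubset hj's)
        (fun i hi => hs i (Finset.mem_of_mem_erase hi)) _ hx' j
        (Finset.mem_erase.2 ⟨fun h => hj'ne h.symm, hj⟩) hne

end SSch1Verma

end Final
section Final2

namespace SSch1Verma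

variable {V : Type*} [AddCommGroup V] [Module ℂ V] (p : ℕ) (ρ : SSch1Verma (p : ℂ) 0 V)

lemma bfun_indep : LinearIndependent ℂ ρ.bfun := by
  rw [bfun_eq]; exact ρ.pbw_indep

lemma bfun_span : Submodule.span ℂ (Set.range ρ.bfun) = ⊤ := by
  rw [bfun_eq]; exact ρ.pbw_span

/-- the PBW basis -/
noncomputable def basisV : Module.Basis Idx ℂ V :=
  Module.Basis.mk (bfun_indep p ρ) (le_of_eq (bfun_span p ρ).symm)

lemma coe_basisV : ⇑(basisV p ρ) = ρ.bfun := Module.Basis.coe_mk _ _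

lemma mem_W0_iff (w : V) :
    w ∈ ρ.W0 p ↔ ↑((basisV p ρ).repr w).support ⊆ {i : Idx | ¬ IsGood p i} := by
  rw [W0, ← coe_basisV p ρ]
  exact Module.Basis.mem_span_image (basisV p ρ)

/-- any invariant subspace containing `W0` and a vector outside `W0` contains a good
basis vector -/
lemma good_component_mem {W : Submodule ℂ V} (hW : ρ.Invariant W) (hW0 : ρ.W0 p ≤ W)
    {w : V} (hwW : w ∈ W) (hwn : w ∉ ρ.W0 p) :
    ∃ i : Idx, IsGood p i ∧ ρ.bfun i ∈ W := by
  classical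
  set B := basisV p ρ with hB
  set cf := B.repr w with hcf
  have hrepr : ∑ i ∈ cf.support, cf i • ρ.bfun i = w := by
    have := B.linearCombination_repr w
    rw [Finsupp.linearCombination_apply, Finsupp.sum] at this
    rw [← this]
    refine Finset.sum_congr rfl fun i _ => by rw [hB, coe_basisV p ρ]
  set sg := cf.support.filter (fun i => IsGood p i) with hsg
  set sb := cf.support.filter (fun i => ¬ IsGood p i) with hsb
  have hsplit : ∑ i ∈ sg, cf i • ρ.bfun i + ∑ i ∈ sb, cf i • ρ.bfun i = w := by
    rw [hsg, hsb, Finset.sum_filter_add_sum_filter_not, hrepr]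
  have hsbW0 : ∑ i ∈ sb, cf i • ρ.bfun i ∈ ρ.W0 p := by
    refine Submodule.sum_mem _ fun i hi => Submodule.smul_mem _ _ ?_
    exact Submodule.subset_span ⟨i, (Finset.mem_filter.1 hi).2, rfl⟩
  have hsgW : ∑ i ∈ sg, cf i • ρ.bfun i ∈ W := by
    have : ∑ i ∈ sg, cf i • ρ.bfun i = w - ∑ i ∈ sb, cf i • ρ.bfun i := by
      rw [← hsplit]; abel
    rw [this]
    exact sub_mem hwW (hW0 hsbW0)
  have hne : sg.Nonempty := by
    rcases Finset.eq_empty_or_nonempty sg with h | h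
    · exfalso
      apply hwn
      rw [← hsplit, h, Finset.sum_empty, zero_add]
      exact hsbW0
    · exact h
  obtain ⟨j, hj⟩ := hne
  have hjg : IsGood p j := (Finset.mem_filter.1 hj).2
  have hjs : cf j ≠ 0 := Finsupp.mem_support_iff.1 (Finset.mem_filter.1 hj).1
  exact ⟨j, hjg, extract p ρ hW sg (fun i hi => (Finset.mem_filter.1 hi).2) cf hsgW j hj hjs⟩

/-- from a good basis vector, descend to the lowest weight vector -/
lemma v0_mem_of_good {W : Submodule ℂ V} (hW : ρ.Invariant W)
    (h : ∃ i : Idx, IsGood p i ∧ ρ.bfun i ∈ W) : ρ.v0 ∈ W := by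
  have down : ∀ l, l ≤ p → ρ.bv 0 l false false ∈ W → ρ.v0 ∈ W := by
    intro l
    induction l with
    | zero => intro _ h; rwa [bv00ff] at h
    | succ l ih =>
      intro hl h
      have hH := step_H ρ hW h
      rw [H_bv_f] at hH
      simp only [Nat.add_sub_cancel] at hH
      have hz : (((l+1 : ℕ):ℂ) * (((0:ℕ):ℂ) + ((l+1 : ℕ):ℂ) - 1 - (p:ℂ))) ≠ 0 := by
        refine mul_ne_zero (Nat.cast_ne_zero.2 (Nat.succ_ne_zero l)) ?_
        intro hh
        have hlp : (l:ℂ) = (p:ℂ) := by push_cast at hh ⊢; linear_combination hh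
        have : l = p := Nat.cast_injective hlp
        omega
      exact ih (by omega) (mem_of_smul_mem hz hH)
  obtain ⟨⟨k, l, a, c⟩, hg, hm⟩ := h
  obtain ⟨hk, hc, hlb⟩ := hg
  subst hk hc
  cases a
  · simp only [if_false] at hlb
    exact down l (by omega) hm
  · simp only [if_true] at hlb
    have hQ := step_Q ρ hW hm
    rw [Q_bv_tf] at hQ
    simp only [Nat.cast_zero, zero_smul, neg_zero, zero_add, sub_zero] at hQ
    have hz : (p:ℂ) - (l:ℂ) ≠ 0 := by
      intro hh
      have hlp : (l:ℂ) = (p:ℂ) := by linear_combination -hh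
      have : l = p := Nat.cast_injective hlp
      omega
    exact down l (by omega) (mem_of_smul_mem hz hQ)

end SSch1Verma

end Final2
section Final3

namespace SSch1Verma

variable {V : Type*} [AddCommGroup V] [Module ℂ V]

/-- embedding of the index set of the quotient basis -/
def emb (p : ℕ) : Fin (p+1) ⊕ Fin p → Idx :=
  Sum.elim (fun ℓ => (0, (ℓ : ℕ), false, false)) (fun ℓ => (0, (ℓ : ℕ), true, false))

lemma emb_inj (p : ℕ) : Function.Injective (emb p) := by
  rintro (a | a) (b | b) h <;> simp [emb, Prod.ext_iff] at h ⊢ <;>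
    first
      | (exact Fin.ext h)
      | (exact Fin.ext h.1)
      | skip

lemma emb_good (p : ℕ) (i : Fin (p+1) ⊕ Fin p) : IsGood p (emb p i) := by
  rcases i with a | a
  · exact ⟨rfl, rfl, by have := a.2; simp [emb]; omega⟩
  · exact ⟨rfl, rfl, by have := a.2; simp [emb]⟩

variable (p : ℕ) (ρ : SSch1Verma (p : ℂ) 0 V)

lemma main_irred (W : Submodule ℂ V) (hW : ρ.Invariant W)
    (hle : ρ.gen {ρ.G ρ.v0, (ρ.K ^ p * ρ.S) ρ.v0} ≤ W) :
    W = ρ.gen {ρ.G ρ.v0, (ρ.K ^ p * ρ.S) ρ.v0} ∨ W = ⊤ := by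
  rw [gen_two_eq p ρ] at hle ⊢
  by_cases hc : W ≤ ρ.W0 p
  · left; exact le_antisymm hc hle
  · right
    obtain ⟨w, hwW, hwn⟩ := SetLike.not_le_iff_exists.1 hc
    exact reach_top ρ hW (v0_mem_of_good p ρ hW (good_component_mem p ρ hW hle hwW hwn))

lemma fam_eq :
    (fun i : Fin (p + 1) ⊕ Fin p =>
      Sum.elim
        (fun ℓ : Fin (p + 1) =>
          (ρ.gen {ρ.G ρ.v0, (ρ.K ^ p * ρ.S) ρ.v0}).mkQ ((ρ.K ^ (ℓ : ℕ)) ρ.v0))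
        (fun ℓ : Fin p =>
          (ρ.gen {ρ.G ρ.v0, (ρ.K ^ p * ρ.S) ρ.v0}).mkQ ((ρ.K ^ (ℓ : ℕ) * ρ.S) ρ.v0)) i)
      = (ρ.gen {ρ.G ρ.v0, (ρ.K ^ p * ρ.S) ρ.v0}).mkQ ∘ (ρ.bfun ∘ emb p) := by
  funext i
  rcases i with a | a
  · show _ = (ρ.gen {ρ.G ρ.v0, (ρ.K ^ p * ρ.S) ρ.v0}).mkQ (ρ.bv 0 (a : ℕ) false false)
    congr 1
    try simp [bv]
  · show _ = (ρ.gen {ρ.G ρ.v0, (ρ.K ^ p * ρ.S) ρ.v0}).mkQ (ρ.bv 0 (a : ℕ) true false)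
    congr 1
    try simp [bv, Module.End.mul_apply]

lemma main_li :
    LinearIndependent ℂ (fun i : Fin (p + 1) ⊕ Fin p =>
      Sum.elim
        (fun ℓ : Fin (p + 1) =>
          (ρ.gen {ρ.G ρ.v0, (ρ.K ^ p * ρ.S) ρ.v0}).mkQ ((ρ.K ^ (ℓ : ℕ)) ρ.v0))
        (fun ℓ : Fin p =>
          (ρ.gen {ρ.G ρ.v0, (ρ.K ^ p * ρ.S) ρ.v0}).mkQ ((ρ.K ^ (ℓ : ℕ) * ρ.S) ρ.v0)) i) := by
  rw [fam_eq p ρ]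
  have li0 : LinearIndependent ℂ (ρ.bfun ∘ emb p) :=
    (bfun_indep p ρ).comp _ (emb_inj p)
  have hdisj : Disjoint (Submodule.span ℂ (Set.range (ρ.bfun ∘ emb p)))
      (LinearMap.ker (ρ.gen {ρ.G ρ.v0, (ρ.K ^ p * ρ.S) ρ.v0}).mkQ) := by
    rw [Submodule.ker_mkQ, gen_two_eq p ρ, Set.range_comp, W0]
    refine (bfun_indep p ρ).disjoint_span_image ?_
    refine Set.disjoint_left.2 ?_
    rintro i ⟨i', rfl⟩ hbad
    exact hbad (emb_good p i')
  exact li0.map hdisj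

lemma main_span :
    Submodule.span ℂ (Set.range (fun i : Fin (p + 1) ⊕ Fin p =>
      Sum.elim
        (fun ℓ : Fin (p + 1) =>
          (ρ.gen {ρ.G ρ.v0, (ρ.K ^ p * ρ.S) ρ.v0}).mkQ ((ρ.K ^ (ℓ : ℕ)) ρ.v0))
        (fun ℓ : Fin p =>
          (ρ.gen {ρ.G ρ.v0, (ρ.K ^ p * ρ.S) ρ.v0}).mkQ ((ρ.K ^ (ℓ : ℕ) * ρ.S) ρ.v0)) i)) = ⊤ := by
  rw [fam_eq p ρ]
  set J := ρ.gen {ρ.G ρ.v0, (ρ.K ^ p * ρ.S) ρ.v0} with hJ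
  have key : ∀ i : Idx, J.mkQ (ρ.bfun i)
      ∈ Submodule.span ℂ (Set.range (J.mkQ ∘ (ρ.bfun ∘ emb p))) := by
    intro i
    by_cases hg : IsGood p i
    · obtain ⟨k, l, a, c⟩ := i
      obtain ⟨hk, hc, hlb⟩ := hg
      subst hk hc
      cases a
      · simp only [if_false] at hlb
        refine Submodule.subset_span ⟨Sum.inl ⟨l, by omega⟩, ?_⟩
        simp [emb]
      · simp only [if_true] at hlb
        refine Submodule.subset_span ⟨Sum.inr ⟨l, by omega⟩, ?_⟩
        simp [emb]
    · have hmem : ρ.bfun i ∈ J := by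
        rw [hJ, gen_two_eq p ρ]
        exact Submodule.subset_span ⟨i, hg, rfl⟩
      have : J.mkQ (ρ.bfun i) = 0 := by
        rwa [Submodule.mkQ_apply, Submodule.Quotient.mk_eq_zero]
      rw [this]
      exact zero_mem _
  rw [eq_top_iff]
  rintro x -
  obtain ⟨v, rfl⟩ := J.mkQ_surjective x
  have hv : v ∈ Submodule.span ℂ (Set.range ρ.bfun) := by rw [bfun_span p ρ]; trivial
  have hmap : J.mkQ v ∈ Submodule.map J.mkQ (Submodule.span ℂ (Set.range ρ.bfun)) :=
    ⟨v, hv, rfl⟩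
  rw [Submodule.map_span] at hmap
  refine Submodule.span_le.2 ?_ hmap
  rintro y ⟨u, ⟨i, rfl⟩, rfl⟩
  exact key i

lemma main_rank :
    Module.finrank ℂ (V ⧸ ρ.gen {ρ.G ρ.v0, (ρ.K ^ p * ρ.S) ρ.v0}) = 2 * p + 1 := by
  have Bq := Module.Basis.mk (main_li p ρ) (le_of_eq (main_span p ρ).symm)
  rw [Module.finrank_eq_card_basis Bq]
  simp [Fintype.card_sum]
  omega

end SSch1Verma

end Final3

/-- Let `m = 0` and `d = p ∈ ℕ = {1,2,...}`.  Let `I¹ ⊆ V^p` be the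
submodule generated by `G v₀` and `𝓘^p` the submodule of `V^p / I¹` generated by the
singular vector `K^p S w₀`; their join corresponds to the invariant subspace
`J = gen {G v₀, K^p S v₀}` of `V^p`.  Then the factor module `(V^p / I¹)/𝓘^p = V^p / J`
is irreducible, has dimension `2p + 1`, and has basis
`{K^ℓ |0⟩, K^ℓ S |0⟩ (ℓ = 0, …, p-1), K^p |0⟩}`. -/
theorem statement9 {V : Type*} [AddCommGroup V] [Module ℂ V] (p : ℕ) (hp : 1 ≤ p)
    (ρ : SSch1Verma (p : ℂ) 0 V) :
    (∀ W : Submodule ℂ V, ρ.Invariant W →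
      ρ.gen {ρ.G ρ.v0, (ρ.K ^ p * ρ.S) ρ.v0} ≤ W →
      W = ρ.gen {ρ.G ρ.v0, (ρ.K ^ p * ρ.S) ρ.v0} ∨ W = ⊤) ∧
    Module.finrank ℂ (V ⧸ ρ.gen {ρ.G ρ.v0, (ρ.K ^ p * ρ.S) ρ.v0}) = 2 * p + 1 ∧
    (LinearIndependent ℂ (fun i : Fin (p + 1) ⊕ Fin p =>
        Sum.elim
          (fun ℓ : Fin (p + 1) =>
            (ρ.gen {ρ.G ρ.v0, (ρ.K ^ p * ρ.S) ρ.v0}).mkQ ((ρ.K ^ (ℓ : ℕ)) ρ.v0))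
          (fun ℓ : Fin p =>
            (ρ.gen {ρ.G ρ.v0, (ρ.K ^ p * ρ.S) ρ.v0}).mkQ ((ρ.K ^ (ℓ : ℕ) * ρ.S) ρ.v0)) i) ∧
      Submodule.span ℂ (Set.range (fun i : Fin (p + 1) ⊕ Fin p =>
        Sum.elim
          (fun ℓ : Fin (p + 1) =>
            (ρ.gen {ρ.G ρ.v0, (ρ.K ^ p * ρ.S) ρ.v0}).mkQ ((ρ.K ^ (ℓ : ℕ)) ρ.v0))
          (fun ℓ : Fin p =>
            (ρ.gen {ρ.G ρ.v0, (ρ.K ^ p * ρ.S) ρ.v0}).mkQ ((ρ.K ^ (ℓ : ℕ) * ρ.S) ρ.v0)) i)) = ⊤) := by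
  exact ⟨fun W hW hle => SSch1Verma.main_irred p ρ W hW hle,
    SSch1Verma.main_rank p ρ, SSch1Verma.main_li p ρ, SSch1Verma.main_span p ρ⟩
end
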